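/- arXiv:1605.04575 — 9 statements merged into one kernel-verified Lean document; each statement's English description precedes it below -/
import Mathlib

section
/- If T is a subcubic tree of order n, then the fractional porous exponential domination number of T equals (n+2)/6. -/
open SimpleGraph Finset

variable {V : Type*}

/-- `(1/2)^(d-1)` for an extended natural `d`, with value `0` at `∞`. -/
noncomputable def halfPow (d : ℕ∞) : ℝ :=
  if d = ⊤ then 0 else 2 * (1 / 2 : ℝ) ^ d.toNat

/-- `(1/2)^(dist_G(u,v)-1)` using the ordinary graph distance. -/
noncomputable def expw (G : SimpleGraph V) (u v : V) : ℝ :=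
  2 * (1 / 2 : ℝ) ^ G.dist u v

/-- The modified distance `dist_{(G,D)}(u,v)`: minimum length of a path from `u` to `v`
whose only vertex in `D` is the endvertex `v` (`∞` if no such path exists). -/
noncomputable def mdist (G : SimpleGraph V) (D : Finset V) (u v : V) : ℕ∞ :=
  sInf ((fun p : G.Walk u v => (p.length : ℕ∞)) ''
    {p | p.IsPath ∧ v ∈ D ∧ ∀ w ∈ p.support, w ∈ D → w = v})

/-- `w_{(G,D)}(u)`. -/
noncomputable def wblock (G : SimpleGraph V) (D : Finset V) (u : V) : ℝ :=
  ∑ v ∈ D, halfPow (mdist G D u v)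

/-- `w*_{(G,D)}(u)`. -/
noncomputable def wstar (G : SimpleGraph V) (D : Finset V) (u : V) : ℝ :=
  ∑ v ∈ D, expw G u v

def IsExpDomSet (G : SimpleGraph V) (D : Finset V) : Prop :=
  ∀ u : V, 1 ≤ wblock G D u

def IsPorousExpDomSet (G : SimpleGraph V) (D : Finset V) : Prop :=
  ∀ u : V, 1 ≤ wstar G D u

def IsDomSet (G : SimpleGraph V) (D : Finset V) : Prop :=
  ∀ v : V, v ∉ D → ∃ u ∈ D, G.Adj u v

/-- The exponential domination number `γ_e(G)`. -/
noncomputable def gammaE (G : SimpleGraph V) [Fintype V] : ℕ :=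
  sInf {k | ∃ D : Finset V, IsExpDomSet G D ∧ D.card = k}

/-- The porous exponential domination number `γ*_e(G)`. -/
noncomputable def gammaEStar (G : SimpleGraph V) [Fintype V] : ℕ :=
  sInf {k | ∃ D : Finset V, IsPorousExpDomSet G D ∧ D.card = k}

/-- The domination number `γ(G)`. -/
noncomputable def gammaDom (G : SimpleGraph V) [Fintype V] : ℕ :=
  sInf {k | ∃ D : Finset V, IsDomSet G D ∧ D.card = k}

/-- Feasibility for the LP relaxation of porous exponential domination. -/
def FracFeasible (G : SimpleGraph V) [Fintype V] (x : V → ℝ) : Prop :=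
  (∀ u, 0 ≤ x u) ∧ ∀ v : V, 1 ≤ ∑ u : V, expw G u v * x u

/-- The fractional porous exponential domination number `γ*_{e,f}(G)`. -/
noncomputable def gammaEF (G : SimpleGraph V) [Fintype V] : ℝ :=
  sInf {s | ∃ x : V → ℝ, FracFeasible G x ∧ s = ∑ u : V, x u}

/-- A graph is subcubic if all degrees are at most `3`. -/
def Subcubic (G : SimpleGraph V) [Fintype V] [DecidableRel G.Adj] : Prop :=
  ∀ v : V, G.degree v ≤ 3

section AuxTree
variable {V : Type*} {G : SimpleGraph V}

/-- Vertices strictly inside a shortest walk are strictly closer to the target. -/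
lemma aux_dist_lt_of_mem_support {w v x : V} {p : G.Walk w v}
    (hp : p.length = G.dist w v) (hx : x ∈ p.support) (hxw : x ≠ w) :
    G.dist x v < G.dist w v := by
  obtain ⟨q, r, rfl⟩ := SimpleGraph.Walk.mem_support_iff_exists_append.mp hx
  have h1 : G.dist x v ≤ r.length := SimpleGraph.dist_le r
  have h2 : q.length ≠ 0 := fun h0 => hxw (SimpleGraph.Walk.eq_of_length_eq_zero h0).symm
  rw [SimpleGraph.Walk.length_append] at hp
  omega

lemma aux_exists_parent (hconn : G.Connected) {u v : V} (h : u ≠ v) :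
    ∃ w, G.Adj u w ∧ G.dist w v + 1 = G.dist u v := by
  obtain ⟨p, hp⟩ := (hconn u v).exists_walk_length_eq_dist
  cases p with
  | nil => exact absurd rfl h
  | @cons _ w _ hadj q =>
    refine ⟨w, hadj, ?_⟩
    have h1 : G.dist w v ≤ q.length := SimpleGraph.dist_le q
    have h2 : G.dist u v ≤ G.dist w v + 1 := by
      obtain ⟨r, hr⟩ := (hconn w v).exists_walk_length_eq_dist
      have := SimpleGraph.dist_le (SimpleGraph.Walk.cons hadj r)
      rw [SimpleGraph.Walk.length_cons, hr] at this
      omega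
    rw [SimpleGraph.Walk.length_cons] at hp
    omega

/-- In a tree, the neighbour closer to `v` is unique. -/
lemma aux_parent_unique (hT : G.IsTree) {u v w1 w2 : V}
    (h1 : G.Adj u w1) (h2 : G.Adj u w2)
    (hd1 : G.dist w1 v + 1 = G.dist u v) (hd2 : G.dist w2 v + 1 = G.dist u v) :
    w1 = w2 := by
  obtain ⟨_, huniq⟩ := (isTree_iff_existsUnique_path.mp hT)
  obtain ⟨p1, hp1len⟩ := (hT.isConnected w1 v).exists_walk_length_eq_dist
  obtain ⟨p2, hp2len⟩ := (hT.isConnected w2 v).exists_walk_length_eq_dist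
  have hp1 : p1.IsPath := p1.isPath_of_length_eq_dist hp1len
  have hp2 : p2.IsPath := p2.isPath_of_length_eq_dist hp2len
  have hu1 : u ∉ p1.support := by
    intro hmem
    rcases eq_or_ne u w1 with h | h
    · exact G.irrefl (h ▸ h1)
    · have := aux_dist_lt_of_mem_support hp1len hmem h; omega
  have hu2 : u ∉ p2.support := by
    intro hmem
    rcases eq_or_ne u w2 with h | h
    · exact G.irrefl (h ▸ h2)
    · have := aux_dist_lt_of_mem_support hp2len hmem h; omega
  have hP1 : (SimpleGraph.Walk.cons h1 p1).IsPath :=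
    SimpleGraph.Walk.IsPath.cons hp1 hu1
  have hP2 : (SimpleGraph.Walk.cons h2 p2).IsPath :=
    SimpleGraph.Walk.IsPath.cons hp2 hu2
  obtain ⟨q, _, hq⟩ := huniq u v
  have heq : SimpleGraph.Walk.cons h1 p1 = SimpleGraph.Walk.cons h2 p2 := by
    rw [hq _ hP1, hq _ hP2]
  have := congrArg (fun w => w.getVert 1) heq
  simpa using this

/-- In a tree, adjacent vertices have different distances to any vertex. -/
lemma aux_adj_dist_ne (hT : G.IsTree) {u w v : V} (h : G.Adj u w)
    (hd : G.dist u v = G.dist w v) : False := by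
  obtain ⟨_, huniq⟩ := (isTree_iff_existsUnique_path.mp hT)
  obtain ⟨p, hplen⟩ := (hT.isConnected w v).exists_walk_length_eq_dist
  obtain ⟨q, hqlen⟩ := (hT.isConnected u v).exists_walk_length_eq_dist
  have hp : p.IsPath := p.isPath_of_length_eq_dist hplen
  have hq' : q.IsPath := q.isPath_of_length_eq_dist hqlen
  have hu : u ∉ p.support := by
    intro hmem
    rcases eq_or_ne u w with h' | h'
    · exact G.irrefl (h' ▸ h)
    · have := aux_dist_lt_of_mem_support hplen hmem h'; omega
  have hP : (SimpleGraph.Walk.cons h p).IsPath := SimpleGraph.Walk.IsPath.cons hp hu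
  obtain ⟨r, _, hr⟩ := huniq u v
  have heq : SimpleGraph.Walk.cons h p = q := by rw [hr _ hP, hr _ hq']
  have := congrArg SimpleGraph.Walk.length heq
  rw [SimpleGraph.Walk.length_cons, hplen, hqlen] at this
  omega

lemma aux_adj_dist_cases (hT : G.IsTree) {u w v : V} (h : G.Adj u w) :
    G.dist w v + 1 = G.dist u v ∨ G.dist u v + 1 = G.dist w v := by
  have hne : G.dist u v ≠ G.dist w v := fun he => aux_adj_dist_ne hT h he
  have h1 : G.dist u v ≤ G.dist w v + 1 := by
    obtain ⟨r, hr⟩ := (hT.isConnected w v).exists_walk_length_eq_dist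
    have := SimpleGraph.dist_le (SimpleGraph.Walk.cons h r)
    rw [SimpleGraph.Walk.length_cons, hr] at this; omega
  have h2 : G.dist w v ≤ G.dist u v + 1 := by
    obtain ⟨r, hr⟩ := (hT.isConnected u v).exists_walk_length_eq_dist
    have := SimpleGraph.dist_le (SimpleGraph.Walk.cons h.symm r)
    rw [SimpleGraph.Walk.length_cons, hr] at this; omega
  omega

/-- The key identity: in a tree, `∑_u (1/2)^{dist(u,v)} (3 - deg u) = 3`. -/
lemma aux_tree_identity [Fintype V] [DecidableRel G.Adj] (hT : G.IsTree) (v : V) :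
    ∑ u : V, ((1 : ℝ)/2)^(G.dist u v) * (3 - (G.degree u : ℝ)) = 3 := by
  classical
  set f : V → ℝ := fun u => ((1 : ℝ)/2)^(G.dist u v) with hf
  have hPex : ∀ u : V, ∃ w, u ≠ v → G.Adj u w ∧ G.dist w v + 1 = G.dist u v := by
    intro u
    rcases eq_or_ne u v with h | h
    · exact ⟨u, fun h' => absurd h h'⟩
    · obtain ⟨w, hw⟩ := aux_exists_parent hT.isConnected h
      exact ⟨w, fun _ => hw⟩
  choose P hP using hPex
  set s : Finset (V × V) := univ.filter (fun p => G.Adj p.1 p.2) with hs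
  have key0 : ∑ u : V, (G.degree u : ℝ) * f u = ∑ p ∈ s, f p.1 := by
    rw [hs, Finset.sum_filter, Fintype.sum_prod_type]
    congr 1
    ext u
    show (G.degree u : ℝ) * f u = ∑ a : V, if G.Adj u a then f u else 0
    rw [← Finset.sum_filter, Finset.sum_const, ← neighborFinset_eq_filter,
      card_neighborFinset_eq_degree, nsmul_eq_mul]
  set s1 : Finset (V × V) := s.filter (fun p => G.dist p.2 v < G.dist p.1 v) with hs1
  set s2 : Finset (V × V) := s.filter (fun p => ¬ G.dist p.2 v < G.dist p.1 v) with hs2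
  have hsplit : ∑ p ∈ s, f p.1 = ∑ p ∈ s1, f p.1 + ∑ p ∈ s2, f p.1 :=
    (Finset.sum_filter_add_sum_filter_not s _ _).symm
  have hmem1 : ∀ p : V × V, p ∈ s1 ↔ G.Adj p.1 p.2 ∧ G.dist p.2 v < G.dist p.1 v := by
    intro p; rw [hs1, Finset.mem_filter, hs, Finset.mem_filter]
    simp [Finset.mem_univ]
  have hmem2 : ∀ p : V × V, p ∈ s2 ↔ G.Adj p.1 p.2 ∧ ¬ G.dist p.2 v < G.dist p.1 v := by
    intro p; rw [hs2, Finset.mem_filter, hs, Finset.mem_filter]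
    simp [Finset.mem_univ]
  have key1 : ∑ p ∈ s1, f p.1 = ∑ u ∈ univ.erase v, f u := by
    refine Finset.sum_bij' (fun p _ => p.1) (fun u hu => (u, P u)) ?_ ?_ ?_ ?_ ?_
    · intro p hp
      obtain ⟨hadj, hlt⟩ := (hmem1 p).mp hp
      have h1ne : p.1 ≠ v := by
        intro h; rw [h, SimpleGraph.dist_self] at hlt; omega
      exact Finset.mem_erase.mpr ⟨h1ne, Finset.mem_univ _⟩
    · intro u hu
      have hu' : u ≠ v := (Finset.mem_erase.mp hu).1
      obtain ⟨hadj, hdist⟩ := hP u hu'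
      show (u, P u) ∈ s1
      refine (hmem1 _).mpr ⟨hadj, ?_⟩
      show G.dist (P u) v < G.dist u v
      omega
    · intro p hp
      obtain ⟨hadj, hlt⟩ := (hmem1 p).mp hp
      have h1ne : p.1 ≠ v := by
        intro h; rw [h, SimpleGraph.dist_self] at hlt; omega
      obtain ⟨hadj', hdist'⟩ := hP p.1 h1ne
      have hd2 : G.dist p.2 v + 1 = G.dist p.1 v := by
        rcases aux_adj_dist_cases (v := v) hT hadj with h | h
        · exact h
        · omega
      have hPp : P p.1 = p.2 := aux_parent_unique hT hadj' hadj hdist' hd2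
      simp [hPp]
    · intro u hu; rfl
    · intro p hp; rfl
  have key2 : ∑ p ∈ s2, f p.1 = ∑ u ∈ univ.erase v, 2 * f u := by
    refine Finset.sum_bij' (fun p _ => p.2) (fun u hu => (P u, u)) ?_ ?_ ?_ ?_ ?_
    · intro p hp
      obtain ⟨hadj, hnlt⟩ := (hmem2 p).mp hp
      have hd : G.dist p.1 v + 1 = G.dist p.2 v := by
        rcases aux_adj_dist_cases (v := v) hT hadj with h | h
        · omega
        · exact h
      have h2ne : p.2 ≠ v := by
        intro h; rw [h, SimpleGraph.dist_self] at hd; omega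
      exact Finset.mem_erase.mpr ⟨h2ne, Finset.mem_univ _⟩
    · intro u hu
      have hu' : u ≠ v := (Finset.mem_erase.mp hu).1
      obtain ⟨hadj, hdist⟩ := hP u hu'
      show (P u, u) ∈ s2
      refine (hmem2 _).mpr ⟨hadj.symm, ?_⟩
      show ¬ G.dist u v < G.dist (P u) v
      omega
    · intro p hp
      obtain ⟨hadj, hnlt⟩ := (hmem2 p).mp hp
      have hd : G.dist p.1 v + 1 = G.dist p.2 v := by
        rcases aux_adj_dist_cases (v := v) hT hadj with h | h
        · omega
        · exact h
      have h2ne : p.2 ≠ v := by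
        intro h; rw [h, SimpleGraph.dist_self] at hd; omega
      obtain ⟨hadj', hdist'⟩ := hP p.2 h2ne
      have hPp : P p.2 = p.1 := aux_parent_unique hT hadj' hadj.symm hdist' hd
      simp [hPp]
    · intro u hu; rfl
    · intro p hp
      obtain ⟨hadj, hnlt⟩ := (hmem2 p).mp hp
      have hd : G.dist p.1 v + 1 = G.dist p.2 v := by
        rcases aux_adj_dist_cases (v := v) hT hadj with h | h
        · omega
        · exact h
      show f p.1 = 2 * f p.2
      rw [hf]
      simp only
      rw [← hd, pow_succ]
      ring
  have hdegsum : ∑ u : V, (G.degree u : ℝ) * f u = 3 * ∑ u ∈ univ.erase v, f u := by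
    rw [key0, hsplit, key1, key2, ← Finset.sum_add_distrib, Finset.mul_sum]
    congr 1; ext u; ring
  have hfv : f v = 1 := by rw [hf]; simp [SimpleGraph.dist_self]
  have htotal : ∑ u : V, f u = f v + ∑ u ∈ univ.erase v, f u :=
    (Finset.add_sum_erase univ f (Finset.mem_univ v)).symm
  calc ∑ u : V, f u * (3 - (G.degree u : ℝ))
      = 3 * ∑ u : V, f u - ∑ u : V, (G.degree u : ℝ) * f u := by
        rw [Finset.mul_sum, ← Finset.sum_sub_distrib]; congr 1; ext u; ring
    _ = 3 := by rw [hdegsum, htotal, hfv]; ring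

end AuxTree

/-- If `T` is a subcubic tree of order `n`, then `γ*_{e,f}(T) = (n+2)/6`. -/
theorem stmt_0 {V : Type*} [Fintype V] (G : SimpleGraph V) [DecidableRel G.Adj]
    (hT : G.IsTree) (hsub : Subcubic G) :
    gammaEF G = ((Fintype.card V : ℝ) + 2) / 6 := by
  classical
  set x0 : V → ℝ := fun u => (3 - (G.degree u : ℝ)) / 6 with hx0
  have hx0nn : ∀ u, 0 ≤ x0 u := by
    intro u
    have h3 : (G.degree u : ℝ) ≤ 3 := by exact_mod_cast hsub u
    rw [hx0]; dsimp only; linarith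
  have hdom : ∀ v : V, ∑ u : V, expw G u v * x0 u = 1 := by
    intro v
    have hid := aux_tree_identity hT v
    have hstep : ∑ u : V, expw G u v * x0 u
        = (∑ u : V, ((1 : ℝ)/2)^(G.dist u v) * (3 - (G.degree u : ℝ))) / 3 := by
      rw [Finset.sum_div]
      refine Finset.sum_congr rfl fun u _ => ?_
      show 2 * (1 / 2 : ℝ) ^ G.dist u v * ((3 - (G.degree u : ℝ)) / 6)
          = ((1 : ℝ)/2)^(G.dist u v) * (3 - (G.degree u : ℝ)) / 3
      ring
    rw [hstep, hid]
    norm_num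
  have hsym : ∀ u w : V, expw G u w = expw G w u := by
    intro u w
    show 2 * (1 / 2 : ℝ) ^ G.dist u w = 2 * (1 / 2 : ℝ) ^ G.dist w u
    rw [SimpleGraph.dist_comm]
  have hfeas : FracFeasible G x0 := ⟨hx0nn, fun v => (hdom v).ge⟩
  have hsumx0 : ∑ u : V, x0 u = ((Fintype.card V : ℝ) + 2) / 6 := by
    have hdeg : (∑ u : V, (G.degree u : ℝ)) = 2 * (G.edgeFinset.card : ℝ) := by
      exact_mod_cast congrArg (Nat.cast (R := ℝ)) G.sum_degrees_eq_twice_card_edges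
    have hE : (G.edgeFinset.card : ℝ) + 1 = (Fintype.card V : ℝ) := by
      exact_mod_cast hT.card_edgeFinset
    rw [hx0]
    dsimp only
    rw [← Finset.sum_div, Finset.sum_sub_distrib, hdeg, Finset.sum_const,
      Finset.card_univ, nsmul_eq_mul, ← hE]
    ring
  have hlb : ∀ s ∈ {s | ∃ x : V → ℝ, FracFeasible G x ∧ s = ∑ u : V, x u},
      ((Fintype.card V : ℝ) + 2) / 6 ≤ s := by
    rintro s ⟨x, ⟨hxnn, hxfeas⟩, rfl⟩
    have step1 : ∑ v : V, x0 v ≤ ∑ v : V, x0 v * (∑ u : V, expw G u v * x u) := by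
      refine Finset.sum_le_sum fun v _ => ?_
      calc x0 v = x0 v * 1 := (mul_one _).symm
        _ ≤ x0 v * (∑ u : V, expw G u v * x u) :=
            mul_le_mul_of_nonneg_left (hxfeas v) (hx0nn v)
    have step2 : ∑ v : V, x0 v * (∑ u : V, expw G u v * x u) = ∑ u : V, x u := by
      calc ∑ v : V, x0 v * (∑ u : V, expw G u v * x u)
          = ∑ v : V, ∑ u : V, expw G u v * x0 v * x u := by
            refine Finset.sum_congr rfl fun v _ => ?_
            rw [Finset.mul_sum]
            refine Finset.sum_congr rfl fun u _ => ?_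
            ring
        _ = ∑ u : V, ∑ v : V, expw G u v * x0 v * x u := Finset.sum_comm
        _ = ∑ u : V, (∑ v : V, expw G v u * x0 v) * x u := by
            refine Finset.sum_congr rfl fun u _ => ?_
            rw [Finset.sum_mul]
            refine Finset.sum_congr rfl fun v _ => ?_
            rw [hsym u v]
        _ = ∑ u : V, x u := by
            refine Finset.sum_congr rfl fun u _ => ?_
            rw [hdom u, one_mul]
    rw [← hsumx0]
    exact step1.trans step2.le
  have hmem : ((Fintype.card V : ℝ) + 2) / 6
      ∈ {s | ∃ x : V → ℝ, FracFeasible G x ∧ s = ∑ u : V, x u} :=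
    ⟨x0, hfeas, hsumx0.symm⟩
  unfold gammaEF
  exact le_antisymm (csInf_le ⟨_, fun s hs => hlb s hs⟩ hmem) (le_csInf ⟨_, hmem⟩ hlb)
end

section
/- In a tree whose every vertex has degree 1 or 3, assigning weight 1 to every endvertex yields, for each vertex v, that the sum over all endvertices u of (1/2)^{dist(u,v)-1} equals exactly 3. -/
open SimpleGraph Finset

variable {V : Type*}

section Aux

variable {V : Type*} {G : SimpleGraph V}

private lemma split_len {a b c : V} [DecidableEq V] (p : G.Walk a b) (h : c ∈ p.support) :
    (p.takeUntil c h).length + (p.dropUntil c h).length = p.length := by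
  conv_rhs => rw [← p.take_spec h]
  rw [SimpleGraph.Walk.length_append]

private lemma dist_ne_of_adj (hT : G.IsTree) {v w : V} (hvw : G.Adj v w) (u : V) :
    G.dist v u ≠ G.dist w u := by
  classical
  have hc := hT.isConnected
  intro h
  by_cases h0 : G.dist v u = 0
  · have hv : v = u := (hc.dist_eq_zero_iff).mp h0
    have hw : w = u := (hc.dist_eq_zero_iff).mp (h ▸ h0)
    exact hvw.ne (hv.trans hw.symm)
  · obtain ⟨p, hp, hl⟩ := hc.exists_path_of_dist v u
    have hvw1 : G.dist v w = 1 := SimpleGraph.dist_eq_one_iff_adj.mpr hvw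
    have hwp : w ∉ p.support := by
      intro hws
      have h1 : G.dist v w ≤ (p.takeUntil w hws).length := SimpleGraph.dist_le _
      have h2 : G.dist w u ≤ (p.dropUntil w hws).length := SimpleGraph.dist_le _
      have h3 := split_len p hws
      omega
    have hq : (SimpleGraph.Walk.cons hvw.symm p).IsPath :=
      (SimpleGraph.Walk.cons_isPath_iff _ _).mpr ⟨hp, hwp⟩
    obtain ⟨r, hr, hrl⟩ := hc.exists_path_of_dist w u
    have := (hT.existsUnique_path w u).unique hq hr
    have hlen := congrArg SimpleGraph.Walk.length this
    simp only [SimpleGraph.Walk.length_cons] at hlen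
    omega

private lemma dist_succ_or (hT : G.IsTree) {v w : V} (hvw : G.Adj v w) (u : V) :
    G.dist v u = G.dist w u + 1 ∨ G.dist w u = G.dist v u + 1 := by
  have hc := hT.isConnected
  have h1 : G.dist v u ≤ G.dist v w + G.dist w u := hc.dist_triangle
  have h2 : G.dist w u ≤ G.dist w v + G.dist v u := hc.dist_triangle
  have hvw1 : G.dist v w = 1 := SimpleGraph.dist_eq_one_iff_adj.mpr hvw
  have hwv1 : G.dist w v = 1 := SimpleGraph.dist_eq_one_iff_adj.mpr hvw.symm
  have hne := dist_ne_of_adj hT hvw u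
  omega

private lemma gateway_exists (hT : G.IsTree) {u v : V} (h : u ≠ v) :
    ∃ x, G.Adj v x ∧ G.dist x u + 1 = G.dist v u := by
  have hc := hT.isConnected
  have hd : 0 < G.dist v u := hc.pos_dist_of_ne (Ne.symm h)
  obtain ⟨p, hp, hl⟩ := hc.exists_path_of_dist v u
  cases p with
  | nil => simp at hl; simp [SimpleGraph.dist_self] at hd
  | @cons _ x _ hadj q =>
    refine ⟨x, hadj, ?_⟩
    simp only [SimpleGraph.Walk.length_cons] at hl
    have h1 : G.dist x u ≤ q.length := SimpleGraph.dist_le _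
    have h2 : G.dist v u ≤ G.dist v x + G.dist x u := hc.dist_triangle
    have h3 : G.dist v x = 1 := SimpleGraph.dist_eq_one_iff_adj.mpr hadj
    omega

private lemma gateway_unique (hT : G.IsTree) {u v x1 x2 : V} (h1 : G.Adj v x1)
    (h2 : G.Adj v x2) (hd1 : G.dist x1 u + 1 = G.dist v u)
    (hd2 : G.dist x2 u + 1 = G.dist v u) : x1 = x2 := by
  classical
  by_contra hne
  have hc := hT.isConnected
  obtain ⟨q1, hq1, hl1⟩ := hc.exists_path_of_dist x1 u
  obtain ⟨q2, hq2, hl2⟩ := hc.exists_path_of_dist x2 u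
  have hv1 : v ∉ q1.support := by
    intro hvs
    have := SimpleGraph.dist_le (q1.dropUntil v hvs)
    have := SimpleGraph.Walk.length_dropUntil_le q1 hvs
    omega
  have hv2 : v ∉ q2.support := by
    intro hvs
    have := SimpleGraph.dist_le (q2.dropUntil v hvs)
    have := SimpleGraph.Walk.length_dropUntil_le q2 hvs
    omega
  have hp1 : (SimpleGraph.Walk.cons h1 q1).IsPath :=
    (SimpleGraph.Walk.cons_isPath_iff _ _).mpr ⟨hq1, hv1⟩
  have hp2 : (SimpleGraph.Walk.cons h2 q2).IsPath :=
    (SimpleGraph.Walk.cons_isPath_iff _ _).mpr ⟨hq2, hv2⟩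
  have hx2 : x2 ∉ (SimpleGraph.Walk.cons h1 q1).support := by
    simp only [SimpleGraph.Walk.support_cons, List.mem_cons]
    rintro (rfl | hin)
    · exact h2.ne rfl
    · have ht : G.dist x1 x2 ≤ (q1.takeUntil x2 hin).length := SimpleGraph.dist_le _
      have hdp : G.dist x2 u ≤ (q1.dropUntil x2 hin).length := SimpleGraph.dist_le _
      have hsp := split_len q1 hin
      have hpos : 0 < G.dist x1 x2 := hc.pos_dist_of_ne hne
      omega
  have heq := (hT.existsUnique_path v u).unique hp1 hp2
  rw [heq] at hx2
  exact hx2 (by simp [SimpleGraph.Walk.support_cons])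

private lemma branch_mono (hT : G.IsTree) {v w x : V} (hvw : G.Adj v w) (hwx : G.Adj w x)
    (hxv : x ≠ v) (u : V) (h : G.dist x u + 1 = G.dist w u) :
    G.dist w u + 1 = G.dist v u := by
  rcases dist_succ_or hT hvw u with h' | h'
  · omega
  · exact absurd (gateway_unique hT hvw.symm hwx h'.symm h) (Ne.symm hxv)

private lemma branch_sum [Fintype V] [DecidableEq V] [DecidableRel G.Adj]
    (hT : G.IsTree) (hdeg : ∀ v : V, G.degree v = 1 ∨ G.degree v = 3) :
    ∀ n (v w : V), G.Adj v w →
      (Finset.univ.filter (fun u => G.dist w u + 1 = G.dist v u)).card = n →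
      (∑ u ∈ Finset.univ.filter
          (fun u => G.degree u = 1 ∧ G.dist w u + 1 = G.dist v u),
        ((1 : ℝ) / 2) ^ (G.dist w u)) = 1 := by
  intro n
  induction n using Nat.strong_induction_on with
  | _ n ih =>
    intro v w hvw hcard
    have hc := hT.isConnected
    have hvw1 : G.dist v w = 1 := SimpleGraph.dist_eq_one_iff_adj.mpr hvw
    set S : Finset V := Finset.univ.filter
      (fun u => G.degree u = 1 ∧ G.dist w u + 1 = G.dist v u) with hS
    set A : Finset V := (G.neighborFinset w).erase v with hA
    have hAadj : ∀ x ∈ A, G.Adj w x ∧ x ≠ v := by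
      intro x hx
      rw [hA, Finset.mem_erase, SimpleGraph.mem_neighborFinset] at hx
      exact ⟨hx.2, hx.1⟩
    have hkey : S.erase w = A.biUnion (fun x => Finset.univ.filter
        (fun u => G.degree u = 1 ∧ G.dist x u + 1 = G.dist w u)) := by
      ext u
      simp only [Finset.mem_erase, Finset.mem_biUnion, Finset.mem_filter,
        Finset.mem_univ, true_and, hS]
      constructor
      · rintro ⟨hnw, hleaf, hbr⟩
        obtain ⟨x, hadj, hgw⟩ := gateway_exists hT hnw
        refine ⟨x, ?_, hleaf, hgw⟩
        rw [hA, Finset.mem_erase, SimpleGraph.mem_neighborFinset]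
        refine ⟨fun hxv => ?_, hadj⟩
        rw [hxv] at hgw
        omega
      · rintro ⟨x, hx, hleaf, hgw⟩
        obtain ⟨hadj, hxv⟩ := hAadj x hx
        have hnw : u ≠ w := by
          intro rfl'
          rw [rfl'] at hgw
          simp [SimpleGraph.dist_self] at hgw
        exact ⟨hnw, hleaf, branch_mono hT hvw hadj hxv u hgw⟩
    have hdisj : (A : Set V).PairwiseDisjoint (fun x => Finset.univ.filter
        (fun u => G.degree u = 1 ∧ G.dist x u + 1 = G.dist w u)) := by
      intro x1 hx1 x2 hx2 hne
      simp only [Finset.disjoint_left, Finset.mem_filter, Finset.mem_univ, true_and]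
      rintro u ⟨_, hg1⟩ ⟨_, hg2⟩
      exact hne (gateway_unique hT (hAadj x1 hx1).1 (hAadj x2 hx2).1 hg1 hg2)
    have hinner : ∀ x ∈ A, (∑ u ∈ Finset.univ.filter
        (fun u => G.degree u = 1 ∧ G.dist x u + 1 = G.dist w u),
        ((1 : ℝ) / 2) ^ (G.dist w u)) = 1 / 2 := by
      intro x hx
      obtain ⟨hadj, hxv⟩ := hAadj x hx
      have hsub : Finset.univ.filter (fun u => G.dist x u + 1 = G.dist w u) ⊆
          Finset.univ.filter (fun u => G.dist w u + 1 = G.dist v u) := by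
        intro u hu
        rw [Finset.mem_filter] at hu ⊢
        exact ⟨hu.1, branch_mono hT hvw hadj hxv u hu.2⟩
      have hwB : w ∈ Finset.univ.filter (fun u => G.dist w u + 1 = G.dist v u) := by
        simp [SimpleGraph.dist_self, hvw1]
      have hwnB : w ∉ Finset.univ.filter (fun u => G.dist x u + 1 = G.dist w u) := by
        simp [SimpleGraph.dist_self]
      have hlt : (Finset.univ.filter (fun u => G.dist x u + 1 = G.dist w u)).card < n := by
        rw [← hcard]
        exact Finset.card_lt_card ⟨hsub, fun hsup => hwnB (hsup hwB)⟩
      have := ih _ hlt w x hadj rfl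
      calc (∑ u ∈ Finset.univ.filter
            (fun u => G.degree u = 1 ∧ G.dist x u + 1 = G.dist w u),
            ((1 : ℝ) / 2) ^ (G.dist w u))
          = ∑ u ∈ Finset.univ.filter
            (fun u => G.degree u = 1 ∧ G.dist x u + 1 = G.dist w u),
            (1 / 2) * ((1 : ℝ) / 2) ^ (G.dist x u) := by
            apply Finset.sum_congr rfl
            intro u hu
            rw [Finset.mem_filter] at hu
            rw [← hu.2.2, pow_succ]
            ring
        _ = 1 / 2 := by rw [← Finset.mul_sum, this]; norm_num
    have hsum_erase : (∑ u ∈ S.erase w, ((1 : ℝ) / 2) ^ (G.dist w u))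
        = (A.card : ℝ) * (1 / 2) := by
      rw [hkey, Finset.sum_biUnion hdisj]
      rw [Finset.sum_congr rfl hinner, Finset.sum_const, nsmul_eq_mul]
    have hcardA : A.card = G.degree w - 1 := by
      rw [hA, Finset.card_erase_of_mem
        (by rw [SimpleGraph.mem_neighborFinset]; exact hvw.symm),
        SimpleGraph.card_neighborFinset_eq_degree]
    rcases hdeg w with hw1 | hw3
    · have hwS : w ∈ S := by
        simp [hS, hw1, SimpleGraph.dist_self, hvw1]
      have hA0 : A.card = 0 := by omega
      rw [← Finset.sum_erase_add S _ hwS, hsum_erase, hA0]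
      simp [SimpleGraph.dist_self]
    · have hwS : w ∉ S := by
        simp [hS, hw3]
      rw [← Finset.erase_eq_of_notMem hwS, hsum_erase, hcardA, hw3]
      norm_num

end Aux

/-- In a tree whose every vertex has degree 1 or 3 (order at least 2), for each vertex `v`
the sum over all endvertices `u` of `(1/2)^(dist(u,v)-1)` equals `3`. -/
theorem stmt_1 {V : Type*} [Fintype V] (G : SimpleGraph V) [DecidableRel G.Adj]
    (hT : G.IsTree) (hdeg : ∀ v : V, G.degree v = 1 ∨ G.degree v = 3)
    (hcard : 2 ≤ Fintype.card V) (v : V) :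
    ∑ u ∈ Finset.univ.filter (fun u => G.degree u = 1), expw G u v = 3 := by
  classical
  have hc := hT.isConnected
  set L : Finset V := Finset.univ.filter (fun u => G.degree u = 1) with hL
  have hkey : L.erase v = (G.neighborFinset v).biUnion (fun x => Finset.univ.filter
      (fun u => G.degree u = 1 ∧ G.dist x u + 1 = G.dist v u)) := by
    ext u
    simp only [Finset.mem_erase, Finset.mem_biUnion, Finset.mem_filter,
      Finset.mem_univ, true_and, hL, SimpleGraph.mem_neighborFinset]
    constructor
    · rintro ⟨hnv, hleaf⟩
      obtain ⟨x, hadj, hgw⟩ := gateway_exists hT hnv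
      exact ⟨x, hadj, hleaf, hgw⟩
    · rintro ⟨x, hadj, hleaf, hgw⟩
      refine ⟨fun h => ?_, hleaf⟩
      rw [h] at hgw
      simp [SimpleGraph.dist_self] at hgw
  have hdisj : ((G.neighborFinset v : Finset V) : Set V).PairwiseDisjoint
      (fun x => Finset.univ.filter
        (fun u => G.degree u = 1 ∧ G.dist x u + 1 = G.dist v u)) := by
    intro x1 hx1 x2 hx2 hne
    simp only [Finset.coe_mem, SimpleGraph.mem_neighborFinset, Finset.mem_coe] at hx1 hx2
    simp only [Finset.disjoint_left, Finset.mem_filter, Finset.mem_univ, true_and]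
    rintro u ⟨_, hg1⟩ ⟨_, hg2⟩
    exact hne (gateway_unique hT hx1 hx2 hg1 hg2)
  have hinner : ∀ x ∈ G.neighborFinset v, (∑ u ∈ Finset.univ.filter
      (fun u => G.degree u = 1 ∧ G.dist x u + 1 = G.dist v u),
      ((1 : ℝ) / 2) ^ (G.dist v u)) = 1 / 2 := by
    intro x hx
    rw [SimpleGraph.mem_neighborFinset] at hx
    have hbs := branch_sum hT hdeg _ v x hx rfl
    calc (∑ u ∈ Finset.univ.filter
          (fun u => G.degree u = 1 ∧ G.dist x u + 1 = G.dist v u),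
          ((1 : ℝ) / 2) ^ (G.dist v u))
        = ∑ u ∈ Finset.univ.filter
          (fun u => G.degree u = 1 ∧ G.dist x u + 1 = G.dist v u),
          (1 / 2) * ((1 : ℝ) / 2) ^ (G.dist x u) := by
          apply Finset.sum_congr rfl
          intro u hu
          rw [Finset.mem_filter] at hu
          rw [← hu.2.2, pow_succ]
          ring
      _ = 1 / 2 := by rw [← Finset.mul_sum, hbs]; norm_num
  have hsum_erase : (∑ u ∈ L.erase v, ((1 : ℝ) / 2) ^ (G.dist v u))
      = (G.degree v : ℝ) * (1 / 2) := by
    rw [hkey, Finset.sum_biUnion hdisj, Finset.sum_congr rfl hinner,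
      Finset.sum_const, nsmul_eq_mul, SimpleGraph.card_neighborFinset_eq_degree]
  have hH : (∑ u ∈ L, ((1 : ℝ) / 2) ^ (G.dist v u)) = 3 / 2 := by
    rcases hdeg v with h1 | h3
    · have hvL : v ∈ L := by simp [hL, h1]
      rw [← Finset.sum_erase_add L _ hvL, hsum_erase, h1]
      simp [SimpleGraph.dist_self]
      norm_num
    · have hvL : v ∉ L := by simp [hL, h3]
      rw [← Finset.erase_eq_of_notMem hvL, hsum_erase, h3]
      norm_num
  calc (∑ u ∈ L, expw G u v)
      = ∑ u ∈ L, 2 * ((1 : ℝ) / 2) ^ (G.dist v u) := by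
        apply Finset.sum_congr rfl
        intro u _
        rw [expw, SimpleGraph.dist_comm]
    _ = 2 * ∑ u ∈ L, ((1 : ℝ) / 2) ^ (G.dist v u) := by rw [Finset.mul_sum]
    _ = 3 := by rw [hH]; norm_num
end

section
/- Let T be a subcubic tree with γ*_e(T) = γ*_{e,f}(T) > 1 and let D be a minimum porous exponential dominating set of T. Then every vertex of D has degree 3 in T, and every neighbor of a vertex of degree 1 or 2 has degree 3 and does not belong to D. -/
open SimpleGraph Finset

variable {V : Type*}

section AuxLemmas

variable {G : SimpleGraph V}

lemma tree_path_length (hT : G.IsTree) {u v : V} {p : G.Walk u v} (hp : p.IsPath) :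
    p.length = G.dist u v := by
  classical
  obtain ⟨q, hq⟩ := hT.isConnected.exists_walk_length_eq_dist u v
  have h1 : q.bypass.length = G.dist u v :=
    le_antisymm (hq ▸ q.length_bypass_le) (SimpleGraph.dist_le _)
  have h2 : p = q.bypass := (hT.existsUnique_path u v).unique hp q.bypass_isPath
  rw [h2, h1]

lemma dist_adj_dichotomy (hT : G.IsTree) (u : V) {v w : V} (hvw : G.Adj v w) :
    G.dist u v + 1 = G.dist u w ∨ G.dist u w + 1 = G.dist u v := by
  classical
  obtain ⟨p, hp, -⟩ := hT.existsUnique_path u w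
  have hplen : p.length = G.dist u w := tree_path_length hT hp
  have hd1 : G.dist v w = 1 := SimpleGraph.dist_eq_one_iff_adj.2 hvw
  have htri : G.dist u w ≤ G.dist u v + G.dist v w := hT.isConnected.dist_triangle
  by_cases hv : v ∈ p.support
  · left
    have h2 : G.dist u v ≤ (p.takeUntil v hv).length := SimpleGraph.dist_le _
    have h3 : G.dist v w ≤ (p.dropUntil v hv).length := SimpleGraph.dist_le _
    have hsplit := congrArg Walk.length (p.take_spec hv)
    rw [Walk.length_append] at hsplit
    omega
  · right
    have hq : (Walk.cons hvw p.reverse).IsPath := by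
      refine hp.reverse.cons ?_
      rw [Walk.support_reverse, List.mem_reverse]
      exact hv
    have hlen := tree_path_length hT hq
    rw [Walk.length_cons, Walk.length_reverse] at hlen
    have hcomm : G.dist v u = G.dist u v := SimpleGraph.dist_comm ..
    omega

lemma exists_unique_parent (hT : G.IsTree) {u w : V} (hw : w ≠ u) :
    ∃! v : V, G.Adj w v ∧ G.dist u v + 1 = G.dist u w := by
  classical
  obtain ⟨p, hp, -⟩ := hT.existsUnique_path w u
  have hlen : p.length = G.dist w u := tree_path_length hT hp
  have hpos : 0 < G.dist w u := hT.isConnected.pos_dist_of_ne hw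
  have hcomm : G.dist w u = G.dist u w := SimpleGraph.dist_comm ..
  cases p with
  | nil => exact absurd rfl hw
  | @cons _ x _ h q =>
    have hq : q.IsPath := hp.of_cons
    have hqlen : q.length = G.dist x u := tree_path_length hT hq
    have hxcomm : G.dist x u = G.dist u x := SimpleGraph.dist_comm ..
    rw [Walk.length_cons] at hlen
    refine ⟨x, ⟨h, by omega⟩, ?_⟩
    rintro y ⟨hadj, hdy⟩
    obtain ⟨py, hpy, -⟩ := hT.existsUnique_path y u
    have hpylen : py.length = G.dist y u := tree_path_length hT hpy
    have hycomm : G.dist y u = G.dist u y := SimpleGraph.dist_comm ..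
    have hwny : w ∉ py.support := by
      intro hmem
      have hd1 : G.dist w u ≤ (py.dropUntil w hmem).length := SimpleGraph.dist_le _
      have hsplit := congrArg Walk.length (py.take_spec hmem)
      rw [Walk.length_append] at hsplit
      omega
    have hcons : (Walk.cons hadj py).IsPath := hpy.cons hwny
    have hequ : Walk.cons hadj py = Walk.cons h q :=
      (hT.existsUnique_path w u).unique hcons hp
    have hs := congrArg Walk.support hequ
    rw [Walk.support_cons, Walk.support_cons] at hs
    have hs2 : py.support = q.support := by injection hs
    rw [py.support_eq_cons, q.support_eq_cons] at hs2
    injection hs2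


lemma sum_identity [Fintype V] [DecidableRel G.Adj] (hT : G.IsTree) (u : V) :
    ∑ v, ((3:ℝ) - G.degree v) * expw G u v = 6 := by
  classical
  set f : V → ℝ := fun v => (1/2 : ℝ) ^ G.dist u v with hf
  -- the parent function
  have hpar : ∀ w : V, w ≠ u → ∃! v : V, G.Adj w v ∧ G.dist u v + 1 = G.dist u w :=
    fun w hw => exists_unique_parent hT hw
  set P : V → V := fun w => if h : w ≠ u then (hpar w h).exists.choose else w with hP
  have hP1 : ∀ w, w ≠ u → G.Adj w (P w) ∧ G.dist u (P w) + 1 = G.dist u w := by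
    intro w hw
    simp only [hP, dif_pos hw]
    exact (hpar w hw).exists.choose_spec
  have hP2 : ∀ w, w ≠ u → ∀ v, G.Adj w v → G.dist u v + 1 = G.dist u w → v = P w := by
    intro w hw v hadj hd
    obtain ⟨x, hx, hux⟩ := hpar w hw
    have h1 : v = x := hux v ⟨hadj, hd⟩
    have h2 : P w = x := hux _ (hP1 w hw)
    rw [h1, h2]
  set E1 : Finset (V × V) :=
    univ.filter (fun p => G.Adj p.1 p.2 ∧ G.dist u p.1 + 1 = G.dist u p.2) with hE1
  have hne : ∀ p ∈ E1, p.2 ≠ u := by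
    rintro p hp rfl
    simp only [hE1, mem_filter] at hp
    have := hp.2.2
    simp [SimpleGraph.dist_self] at this
  have hfst : ∀ p ∈ E1, p.1 = P p.2 := by
    intro p hp
    have h2 := hne p hp
    simp only [hE1, mem_filter] at hp
    exact hP2 p.2 h2 p.1 hp.2.1.symm hp.2.2
  -- S3 : sum over E1 of f p.2 = sum over erase u
  have S3 : ∑ p ∈ E1, f p.2 = ∑ w ∈ univ.erase u, f w := by
    refine Finset.sum_nbij' (fun p => p.2) (fun w => (P w, w)) ?_ ?_ ?_ ?_ ?_
    · intro p hp
      exact Finset.mem_erase.2 ⟨hne p hp, mem_univ _⟩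
    · intro w hw
      have hw' : w ≠ u := (Finset.mem_erase.1 hw).1
      obtain ⟨ha, hd⟩ := hP1 w hw'
      simp only [hE1, mem_filter]
      exact ⟨mem_univ _, ha.symm, hd⟩
    · intro p hp
      have := hfst p hp
      ext <;> simp [this.symm]
    · intro w hw; rfl
    · intro p hp; rfl
  have S1 : ∑ p ∈ E1, f p.1 = 2 * ∑ p ∈ E1, f p.2 := by
    rw [Finset.mul_sum]
    refine Finset.sum_congr rfl ?_
    intro p hp
    simp only [hE1, mem_filter] at hp
    have hd := hp.2.2
    simp only [hf]
    rw [← hd, pow_succ]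
    ring
  set E : Finset (V × V) := univ.filter (fun p => G.Adj p.1 p.2) with hE
  have hsplitE : E = E1 ∪ E1.image Prod.swap := by
    ext p
    simp only [hE, hE1, mem_filter, mem_union, mem_image, mem_univ, true_and]
    constructor
    · intro ha
      rcases dist_adj_dichotomy hT u ha with h | h
      · exact Or.inl ⟨ha, h⟩
      · exact Or.inr ⟨p.swap, ⟨ha.symm, h⟩, p.swap_swap⟩
    · rintro (⟨ha, -⟩ | ⟨q, ⟨hq, -⟩, rfl⟩)
      · exact ha
      · exact hq.symm
  have hdisj : Disjoint E1 (E1.image Prod.swap) := by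
    rw [Finset.disjoint_left]
    rintro p hp hp'
    obtain ⟨q, hq, rfl⟩ := Finset.mem_image.1 hp'
    simp only [hE1, mem_filter, Prod.fst_swap, Prod.snd_swap] at hp hq
    omega
  have S2 : ∑ p ∈ E, f p.1 = ∑ p ∈ E1, f p.1 + ∑ p ∈ E1, f p.2 := by
    rw [hsplitE, Finset.sum_union hdisj]
    congr 1
    rw [Finset.sum_image (fun a _ b _ h => Prod.swap_injective h)]
    simp
  have hdegf : ∀ v : V, (G.degree v : ℝ) = ∑ w : V, if G.Adj v w then (1:ℝ) else 0 := by
    intro v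
    rw [Finset.sum_boole]
    congr 1
    rw [← SimpleGraph.card_neighborFinset_eq_degree, SimpleGraph.neighborFinset_eq_filter]
  have S0 : ∑ v, (G.degree v : ℝ) * f v = ∑ p ∈ E, f p.1 := by
    rw [hE, Finset.sum_filter, Fintype.sum_prod_type]
    refine Finset.sum_congr rfl fun v _ => ?_
    rw [hdegf, Finset.sum_mul]
    refine Finset.sum_congr rfl fun w _ => ?_
    by_cases h : G.Adj v w <;> simp [h]
  have hfu : f u = 1 := by simp [hf, SimpleGraph.dist_self]
  have herase : ∑ w ∈ univ.erase u, f w = (∑ v, f v) - 1 := by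
    rw [← hfu]
    exact Finset.sum_erase_eq_sub (mem_univ u)
  have hdeg : ∑ v, (G.degree v : ℝ) * f v = 3 * ((∑ v, f v) - 1) := by
    rw [S0, S2, S1, S3, herase]; ring
  have hexp : ∀ v, expw G u v = 2 * f v := fun v => rfl
  have expand : ∀ v : V, ((3:ℝ) - G.degree v) * expw G u v
      = (6:ℝ) * f v - 2 * ((G.degree v : ℝ) * f v) := fun v => by rw [hexp]; ring
  rw [Finset.sum_congr rfl (fun v _ => expand v), Finset.sum_sub_distrib,
    ← Finset.mul_sum univ f (6:ℝ),
    ← Finset.mul_sum univ (fun v => (G.degree v : ℝ) * f v) (2:ℝ), hdeg]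
  ring

lemma expw_comm (G : SimpleGraph V) (u v : V) : expw G u v = expw G v u := by
  unfold expw; rw [SimpleGraph.dist_comm]

lemma expw_pos (G : SimpleGraph V) (u v : V) : 0 < expw G u v := by
  unfold expw; positivity

lemma expw_self (G : SimpleGraph V) (u : V) : expw G u u = 2 := by
  simp [expw, SimpleGraph.dist_self]

/-- sum of `2 (1/2)^(k w)` over a finset can't be `2/3`. -/
lemma not_dyadic_two_thirds (A : Finset V) (k : V → ℕ) :
    (∑ w ∈ A, 2 * (1/2 : ℝ) ^ k w) ≠ 2/3 := by
  classical
  intro hcontra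
  have hA : A.Nonempty := by
    rcases A.eq_empty_or_nonempty with rfl | h
    · norm_num at hcontra
    · exact h
  set m := A.sup k with hm
  have hkle : ∀ w ∈ A, k w ≤ m := fun w hw => Finset.le_sup hw
  have hterm : ∀ w ∈ A, 2 * (1/2 : ℝ) ^ k w = ((2 : ℕ) ^ (m + 1 - k w) : ℝ) / 2 ^ m := by
    intro w hw
    have h1 : (m + 1 - k w) + k w = m + 1 := by have := hkle w hw; omega
    have h2 : (2:ℝ) ^ (m + 1 - k w) * 2 ^ k w = 2 ^ (m+1) := by
      rw [← pow_add, h1]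
    have hne : ((2:ℝ) ^ k w) ≠ 0 := by positivity
    push_cast
    rw [one_div_pow, eq_div_iff (by positivity), ← mul_left_inj' hne, h2]
    field_simp
    ring
  rw [Finset.sum_congr rfl hterm, ← Finset.sum_div] at hcontra
  rw [div_eq_div_iff (by positivity) (by norm_num)] at hcontra
  have hnat2 : (∑ w ∈ A, (2:ℕ) ^ (m + 1 - k w)) * 3 = 2 * 2 ^ m := by
    exact_mod_cast hcontra
  have hdvd : (3:ℕ) ∣ 2 * 2 ^ m := ⟨∑ w ∈ A, (2:ℕ) ^ (m + 1 - k w), by omega⟩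
  have h3 : (3:ℕ).Prime := by norm_num
  rcases (Nat.Prime.dvd_mul h3).1 hdvd with h | h
  · omega
  · have := Nat.Prime.dvd_of_dvd_pow h3 h
    omega


end AuxLemmas

/-- If `T` is a subcubic tree with `γ*_e(T) = γ*_{e,f}(T) > 1` and `D` is a minimum porous
exponential dominating set, then `D ⊆ V₃` and `N(V₁ ∪ V₂) ⊆ V₃ \ D`. -/
theorem stmt_8 {V : Type*} [Fintype V] (G : SimpleGraph V) [DecidableRel G.Adj]
    (hT : G.IsTree) (hsub : Subcubic G)
    (heq : (gammaEStar G : ℝ) = gammaEF G) (hgt : 1 < gammaEStar G)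
    (D : Finset V) (hD : IsPorousExpDomSet G D) (hmin : D.card = gammaEStar G) :
    (∀ v ∈ D, G.degree v = 3) ∧
    ∀ u v : V, (G.degree u = 1 ∨ G.degree u = 2) → G.Adj u v →
      G.degree v = 3 ∧ v ∉ D := by
  classical
  have hid : ∀ u : V, ∑ v, ((3:ℝ) - G.degree v) * expw G u v = 6 := sum_identity hT
  set x₀ : V → ℝ := fun v => ((3:ℝ) - G.degree v) / 6 with hx₀
  have hfeas : FracFeasible G x₀ := by
    constructor
    · intro v
      have h3 : (G.degree v : ℝ) ≤ 3 := by exact_mod_cast hsub v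
      simp only [hx₀]
      linarith
    · intro v
      have hcongr : ∑ u : V, expw G u v * x₀ u
          = (∑ w : V, ((3:ℝ) - G.degree w) * expw G v w) / 6 := by
        rw [Finset.sum_div]
        refine Finset.sum_congr rfl fun w _ => ?_
        rw [expw_comm G w v, hx₀]
        ring
      rw [hcongr, hid v]
      norm_num
  have hbdd : BddBelow {s | ∃ x : V → ℝ, FracFeasible G x ∧ s = ∑ u : V, x u} := by
    refine ⟨0, ?_⟩
    rintro s ⟨x, ⟨hx0, -⟩, rfl⟩
    exact Finset.sum_nonneg fun i _ => hx0 i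
  have hle : gammaEF G ≤ ∑ u : V, x₀ u := csInf_le hbdd ⟨x₀, hfeas, rfl⟩
  have hcard : (D.card : ℝ) ≤ ∑ u : V, x₀ u := by
    rw [hmin, heq]; exact hle
  -- chain
  have hchain : (6:ℝ) * D.card = ∑ v : V, ((3:ℝ) - G.degree v) * wstar G D v := by
    calc (6:ℝ) * D.card = ∑ u ∈ D, (6:ℝ) := by rw [Finset.sum_const, nsmul_eq_mul]; ring
      _ = ∑ u ∈ D, ∑ v : V, ((3:ℝ) - G.degree v) * expw G u v :=
          Finset.sum_congr rfl fun u _ => (hid u).symm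
      _ = ∑ v : V, ∑ u ∈ D, ((3:ℝ) - G.degree v) * expw G u v := Finset.sum_comm
      _ = ∑ v : V, ((3:ℝ) - G.degree v) * wstar G D v := by
          refine Finset.sum_congr rfl fun v _ => ?_
          rw [← Finset.mul_sum]
          congr 1
          exact Finset.sum_congr rfl fun u _ => expw_comm G u v
  have hsum6 : ∑ v : V, ((3:ℝ) - G.degree v) = 6 * ∑ u : V, x₀ u := by
    rw [Finset.mul_sum]
    refine Finset.sum_congr rfl fun v _ => ?_
    rw [hx₀]; ring
  -- complementary slackness
  have hkey : ∀ v : V, G.degree v ≤ 2 → wstar G D v = 1 := by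
    intro v hv
    have hterm : ∀ w : V, w ∈ univ → 0 ≤ ((3:ℝ) - G.degree w) * (wstar G D w - 1) := by
      intro w _
      have h3 : (G.degree w : ℝ) ≤ 3 := by exact_mod_cast hsub w
      have h4 := hD w
      nlinarith
    have hexpand : ∑ w : V, ((3:ℝ) - G.degree w) * (wstar G D w - 1)
        = (∑ w : V, ((3:ℝ) - G.degree w) * wstar G D w) - ∑ w : V, ((3:ℝ) - G.degree w) := by
      rw [← Finset.sum_sub_distrib]
      exact Finset.sum_congr rfl fun w _ => by ring
    have htot : ∑ w : V, ((3:ℝ) - G.degree w) * (wstar G D w - 1) ≤ 0 := by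
      rw [hexpand, ← hchain, hsum6]
      linarith
    have hzero : ∑ w : V, ((3:ℝ) - G.degree w) * (wstar G D w - 1) = 0 :=
      le_antisymm htot (Finset.sum_nonneg hterm)
    have heach := (Finset.sum_eq_zero_iff_of_nonneg hterm).1 hzero v (mem_univ v)
    have hpos : (0:ℝ) < 3 - G.degree v := by
      have : (G.degree v : ℝ) ≤ 2 := by exact_mod_cast hv
      linarith
    have := mul_eq_zero.1 heach
    rcases this with h | h
    · linarith
    · linarith
  have hcard2 : 2 ≤ D.card := by omega
  have hwge : ∀ v ∈ D, (2:ℝ) ≤ wstar G D v := by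
    intro v hv
    have := Finset.single_le_sum (f := fun w => expw G v w)
      (fun w _ => (expw_pos G v w).le) hv
    simpa [wstar, expw_self G v] using this
  have part1 : ∀ v ∈ D, G.degree v = 3 := by
    intro v hv
    by_contra hne
    have hle2 : G.degree v ≤ 2 := by have := hsub v; omega
    have h1 := hkey v hle2
    have h2 := hwge v hv
    linarith
  refine ⟨part1, ?_⟩
  intro u v hu huv
  have hu2 : G.degree u ≤ 2 := by rcases hu with h | h <;> omega
  have hunotD : u ∉ D := fun h => by have := part1 u h; omega
  have hwu : wstar G D u = 1 := hkey u hu2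
  have hvnotD : v ∉ D := by
    intro hvD
    obtain ⟨w, hwD, hwv⟩ := Finset.exists_mem_ne (by omega : 1 < D.card) v
    have h1 : expw G u v = 1 := by
      have : G.dist u v = 1 := SimpleGraph.dist_eq_one_iff_adj.2 huv
      simp [expw, this]
    have hsplit : wstar G D u = expw G u v + ∑ w ∈ D.erase v, expw G u w := by
      rw [wstar, ← Finset.sum_erase_add D _ hvD]
      ring
    have hw2 : expw G u w ≤ ∑ w' ∈ D.erase v, expw G u w' :=
      Finset.single_le_sum (fun w' _ => (expw_pos G u w').le)
        (Finset.mem_erase.2 ⟨hwv, hwD⟩)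
    have := expw_pos G u w
    rw [hwu] at hsplit
    linarith
  refine ⟨?_, hvnotD⟩
  by_contra hdv
  have hv2 : G.degree v ≤ 2 := by have := hsub v; omega
  have hwv : wstar G D v = 1 := hkey v hv2
  set p : V → Prop := fun w => G.dist u w + 1 = G.dist v w with hp
  have hdich : ∀ w ∈ D, ¬ p w → G.dist v w + 1 = G.dist u w := by
    intro w hwD hnp
    have h1 : G.dist w u = G.dist u w := SimpleGraph.dist_comm ..
    have h2 : G.dist w v = G.dist v w := SimpleGraph.dist_comm ..
    rcases dist_adj_dichotomy hT w huv with h | h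
    · exact absurd (show p w by show G.dist u w + 1 = G.dist v w; omega) hnp
    · omega
  have hhalfb : ∑ w ∈ D.filter (fun w => ¬ p w), expw G u w
      = (1/2) * ∑ w ∈ D.filter (fun w => ¬ p w), expw G v w := by
    rw [Finset.mul_sum]
    refine Finset.sum_congr rfl fun w hw => ?_
    obtain ⟨hwD, hnp⟩ := Finset.mem_filter.1 hw
    have hd := hdich w hwD hnp
    unfold expw
    rw [← hd, pow_succ]
    ring
  have hhalfa : ∑ w ∈ D.filter p, expw G v w
      = (1/2) * ∑ w ∈ D.filter p, expw G u w := by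
    rw [Finset.mul_sum]
    refine Finset.sum_congr rfl fun w hw => ?_
    obtain ⟨hwD, hnp⟩ := Finset.mem_filter.1 hw
    have hd : G.dist u w + 1 = G.dist v w := hnp
    unfold expw
    rw [← hd, pow_succ]
    ring
  have hsum_u : (∑ w ∈ D.filter p, expw G u w)
      + (1/2) * (∑ w ∈ D.filter (fun w => ¬ p w), expw G v w) = 1 := by
    rw [← hhalfb, Finset.sum_filter_add_sum_filter_not D p (fun w => expw G u w)]
    exact hwu
  have hsum_v : (1/2) * (∑ w ∈ D.filter p, expw G u w)
      + (∑ w ∈ D.filter (fun w => ¬ p w), expw G v w) = 1 := by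
    rw [← hhalfa, Finset.sum_filter_add_sum_filter_not D p (fun w => expw G v w)]
    exact hwv
  have ha23 : ∑ w ∈ D.filter p, expw G u w = 2/3 := by linarith
  exact not_dyadic_two_thirds (D.filter p) (fun w => G.dist u w)
    (by simpa [expw] using ha23)
end

section
/- If G is a connected graph of diameter d, then γ*_{e,f}(G) ≥ (d+3)/6. -/
open SimpleGraph Finset

variable {V : Type*}

/-! ### Auxiliary lemmas for `stmt_11` -/

lemma geom_half_sum (n : ℕ) : ∑ i ∈ range n, ((1:ℝ)/2)^i = 2 - 2*(1/2)^n := by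
  induction n with
  | zero => simp
  | succ n ih => rw [sum_range_succ, ih, pow_succ]; ring

lemma key_arith_stmt11 (d a : ℕ) :
    (∑ i ∈ range (d+1), ((1:ℝ)/2)^(Nat.dist a i)) + (1/2)^a + (1/2)^(Nat.dist a d) ≤ 3 := by
  induction d generalizing a with
  | zero =>
    have h1 : ((1:ℝ)/2)^a ≤ 1 := pow_le_one₀ (by norm_num) (by norm_num)
    simp only [zero_add, sum_range_one, Nat.dist_zero_right]
    linarith
  | succ d ih =>
    cases a with
    | zero =>
      simp only [Nat.dist_zero_left]
      rw [geom_half_sum]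
      have : ((1:ℝ)/2)^(d+2) = (1/2)^(d+1) * (1/2) := pow_succ _ _
      rw [pow_zero]
      linarith
    | succ a =>
      have hrw : (∑ i ∈ range (d+2), ((1:ℝ)/2)^(Nat.dist (a+1) i))
          = (∑ i ∈ range (d+1), ((1:ℝ)/2)^(Nat.dist a i)) + (1/2)^(a+1) := by
        rw [Finset.sum_range_succ']
        congr 1
        · exact Finset.sum_congr rfl fun i _ => by rw [Nat.dist_succ_succ]
        · rw [Nat.dist_zero_right]
      have hd : Nat.dist (a+1) (d+1) = Nat.dist a d := Nat.dist_succ_succ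
      rw [hrw, hd]
      have := ih a
      have hps : ((1:ℝ)/2)^(a+1) = (1/2)^a * (1/2) := pow_succ _ _
      linarith

lemma exists_walk_getVert_stmt11 {G : SimpleGraph V} {u v : V} (p : G.Walk u v) (i : ℕ) :
    ∃ q : G.Walk u (p.getVert i), q.length ≤ i := by
  induction p generalizing i with
  | nil => exact ⟨SimpleGraph.Walk.nil, by simp⟩
  | cons h p ih =>
    cases i with
    | zero => exact ⟨SimpleGraph.Walk.nil, Nat.le_of_eq rfl⟩
    | succ i =>
      obtain ⟨q, hq⟩ := ih i
      exact ⟨SimpleGraph.Walk.cons h q, by simpa using Nat.succ_le_succ hq⟩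

lemma dist_getVert_le_stmt11 {G : SimpleGraph V} {u v : V} (p : G.Walk u v) (i : ℕ) :
    G.dist u (p.getVert i) ≤ i := by
  obtain ⟨q, hq⟩ := exists_walk_getVert_stmt11 p i
  exact le_trans (SimpleGraph.dist_le q) hq

lemma getVert_dist_le_stmt11 {G : SimpleGraph V} {u v : V} (p : G.Walk u v) (i : ℕ)
    (hi : i ≤ p.length) : G.dist (p.getVert i) v ≤ p.length - i := by
  have h := dist_getVert_le_stmt11 p.reverse (p.length - i)
  rw [SimpleGraph.Walk.getVert_reverse] at h
  have : p.length - (p.length - i) = i := by omega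
  rw [this] at h
  rwa [SimpleGraph.dist_comm]

lemma dist_lb_stmt11 {G : SimpleGraph V} (hc : G.Connected) {s t : V} (p : G.Walk s t)
    (hp : p.length = G.dist s t) (u : V) {i : ℕ} (hi : i ≤ p.length) :
    Nat.dist (G.dist u s) i ≤ G.dist u (p.getVert i) := by
  have hsv1 : G.dist s (p.getVert i) ≤ i := dist_getVert_le_stmt11 p i
  have hvt : G.dist (p.getVert i) t ≤ p.length - i := getVert_dist_le_stmt11 p i hi
  have h1 : G.dist u s ≤ G.dist u (p.getVert i) + i := by
    have ht := hc.dist_triangle (u := u) (v := p.getVert i) (w := s)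
    have hcomm : G.dist (p.getVert i) s = G.dist s (p.getVert i) := SimpleGraph.dist_comm
    omega
  have hst2 : G.dist s t ≤ G.dist s (p.getVert i) + G.dist (p.getVert i) t :=
    hc.dist_triangle
  have h2 : i ≤ G.dist u s + G.dist u (p.getVert i) := by
    have ht := hc.dist_triangle (u := s) (v := u) (w := p.getVert i)
    have hcomm : G.dist s u = G.dist u s := SimpleGraph.dist_comm
    omega
  simp only [Nat.dist]; omega

noncomputable def auxc (d i : ℕ) : ℝ :=
  1/6 + (if i = 0 then (1:ℝ)/6 else 0) + (if i = d then (1:ℝ)/6 else 0)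

lemma auxc_nonneg (d i : ℕ) : 0 ≤ auxc d i := by
  unfold auxc; split_ifs <;> norm_num

lemma auxc_sum (d : ℕ) : ∑ i ∈ range (d+1), auxc d i = ((d:ℝ)+3)/6 := by
  unfold auxc
  rw [sum_add_distrib, sum_add_distrib, sum_const, card_range,
    Finset.sum_ite_eq' (range (d+1)) 0 (fun _ => (1:ℝ)/6),
    Finset.sum_ite_eq' (range (d+1)) d (fun _ => (1:ℝ)/6)]
  simp only [mem_range, Nat.lt_succ_iff, Nat.zero_le, le_refl, if_true]
  ring

/-- If `G` is a connected graph of diameter `d`, then `γ*_{e,f}(G) ≥ (d+3)/6`. -/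
theorem stmt_11 {V : Type*} [Fintype V] (G : SimpleGraph V) (hc : G.Connected) :
    ((G.diam : ℝ) + 3) / 6 ≤ gammaEF G := by
  have hne : Nonempty V := hc.nonempty
  apply le_csInf
  · refine ⟨∑ u : V, (1:ℝ), fun _ => 1, ⟨fun _ => zero_le_one, fun v => ?_⟩, rfl⟩
    have h1 : expw G v v * 1 ≤ ∑ u : V, expw G u v * 1 := by
      apply Finset.single_le_sum (f := fun u => expw G u v * 1) _ (mem_univ v)
      intro u _
      unfold expw
      positivity
    have h2 : expw G v v * 1 = 2 := by
      simp [expw, SimpleGraph.dist_self]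
    linarith
  · rintro r ⟨x, ⟨hx0, hxc⟩, rfl⟩
    set d := G.diam with hd
    obtain ⟨s, t, hst⟩ := G.exists_dist_eq_diam
    obtain ⟨p, hp⟩ := hc.exists_walk_length_eq_dist s t
    have hpl : p.length = d := by rw [hp, hst]
    have key : ∀ u : V, ∑ i ∈ range (d+1), auxc d i * expw G u (p.getVert i) ≤ 1 := by
      intro u
      set a := G.dist u s with ha
      have step1 : ∀ i ∈ range (d+1),
          auxc d i * expw G u (p.getVert i) ≤ auxc d i * (2 * ((1:ℝ)/2)^(Nat.dist a i)) := by
        intro i hi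
        rw [mem_range, Nat.lt_succ_iff] at hi
        apply mul_le_mul_of_nonneg_left _ (auxc_nonneg d i)
        unfold expw
        have hdl : Nat.dist a i ≤ G.dist u (p.getVert i) :=
          dist_lb_stmt11 hc p hp u (by omega)
        have := pow_le_pow_of_le_one (by norm_num : (0:ℝ) ≤ 1/2) (by norm_num) hdl
        linarith
      have step2 : ∑ i ∈ range (d+1), auxc d i * (2 * ((1:ℝ)/2)^(Nat.dist a i)) ≤ 1 := by
        have hexp : ∀ i, auxc d i * (2 * ((1:ℝ)/2)^(Nat.dist a i))
            = (1/3) * ((1:ℝ)/2)^(Nat.dist a i)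
              + (if i = 0 then (1/3) * ((1:ℝ)/2)^(Nat.dist a i) else 0)
              + (if i = d then (1/3) * ((1:ℝ)/2)^(Nat.dist a i) else 0) := by
          intro i; unfold auxc; split_ifs <;> ring
        simp only [hexp]
        rw [sum_add_distrib, sum_add_distrib,
          Finset.sum_ite_eq' (range (d+1)) 0 (fun i => (1/3) * ((1:ℝ)/2)^(Nat.dist a i)),
          Finset.sum_ite_eq' (range (d+1)) d (fun i => (1/3) * ((1:ℝ)/2)^(Nat.dist a i)),
          ← Finset.mul_sum]
        simp only [mem_range, Nat.lt_succ_iff, Nat.zero_le, le_refl, if_true,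
          Nat.dist_zero_right]
        have := key_arith_stmt11 d a
        linarith
      exact le_trans (Finset.sum_le_sum step1) step2
    calc ((d:ℝ)+3)/6 = ∑ i ∈ range (d+1), auxc d i := (auxc_sum d).symm
      _ ≤ ∑ i ∈ range (d+1), auxc d i * (∑ u : V, expw G u (p.getVert i) * x u) := by
          apply Finset.sum_le_sum
          intro i _
          exact le_mul_of_one_le_right (auxc_nonneg d i) (hxc _)
      _ = ∑ u : V, (∑ i ∈ range (d+1), auxc d i * expw G u (p.getVert i)) * x u := by
          simp only [Finset.mul_sum, Finset.sum_mul]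
          rw [Finset.sum_comm]
          exact Finset.sum_congr rfl fun u _ => Finset.sum_congr rfl fun i _ => by ring
      _ ≤ ∑ u : V, 1 * x u := by
          apply Finset.sum_le_sum
          intro u _
          exact mul_le_mul_of_nonneg_right (key u) (hx0 u)
      _ = ∑ u : V, x u := by simp
end

section
/- If G is a connected graph of order n, maximum degree at most 3, and diameter d, then γ*_{e,f}(G) ≥ n/(2+3d). -/
open SimpleGraph Finset

variable {V : Type*}

/-- Predecessor lemma: a vertex at distance `i+1` has a neighbor at distance `i`. -/
lemma exists_pred {V : Type*} {G : SimpleGraph V} (hc : G.Connected) {u v : V} {i : ℕ}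
    (h : G.dist u v = i + 1) : ∃ w, G.Adj w v ∧ G.dist u w = i := by
  obtain ⟨p, hp⟩ := hc.exists_walk_length_eq_dist u v
  rw [h] at hp
  cases hq : p.reverse with
  | nil =>
    have := congrArg SimpleGraph.Walk.length hq
    simp [hp] at this
  | cons hadj q =>
    next w =>
    refine ⟨w, hadj.symm, ?_⟩
    have hlen : q.length = i := by
      have := congrArg SimpleGraph.Walk.length hq
      simp [hp] at this; omega
    have h1 : G.dist u w ≤ i := by
      have := G.dist_le q.reverse
      simpa [hlen] using this
    have h2 : i ≤ G.dist u w := by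
      have ht := hc.dist_triangle (u := u) (v := w) (w := v)
      have hd : G.dist w v = 1 := SimpleGraph.dist_eq_one_iff_adj.mpr hadj.symm
      omega
    omega

lemma sphere_card {V : Type*} [Fintype V] [DecidableEq V] {G : SimpleGraph V} [DecidableRel G.Adj]
    (hc : G.Connected) (hdeg : ∀ v, G.degree v ≤ 3) (u : V) :
    ∀ i : ℕ, (Finset.univ.filter (fun v => G.dist u v = i + 1)).card ≤ 3 * 2 ^ i := by
  intro i
  induction i with
  | zero =>
    have hsub : (Finset.univ.filter (fun v => G.dist u v = 1)) ⊆ G.neighborFinset u := by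
      intro v hv
      simp only [Finset.mem_filter] at hv
      rw [SimpleGraph.mem_neighborFinset]
      exact SimpleGraph.dist_eq_one_iff_adj.mp hv.2
    calc _ ≤ (G.neighborFinset u).card := Finset.card_le_card hsub
      _ = G.degree u := G.card_neighborFinset_eq_degree u
      _ ≤ 3 * 2 ^ 0 := by simpa using hdeg u
  | succ i ih =>
    set S := Finset.univ.filter (fun v => G.dist u v = i + 1) with hS
    set T := Finset.univ.filter (fun v => G.dist u v = i + 2) with hT
    have hsub : T ⊆ S.biUnion (fun w => G.neighborFinset w ∩ T) := by
      intro v hv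
      simp only [hT, Finset.mem_filter] at hv
      obtain ⟨w, hadj, hw⟩ := exists_pred hc hv.2
      refine Finset.mem_biUnion.mpr ⟨w, ?_, ?_⟩
      · simp [hS, hw]
      · simp only [Finset.mem_inter, SimpleGraph.mem_neighborFinset]
        exact ⟨hadj, by simp [hT, hv.2]⟩
    have hbound : ∀ w ∈ S, (G.neighborFinset w ∩ T).card ≤ 2 := by
      intro w hw
      simp only [hS, Finset.mem_filter] at hw
      obtain ⟨w', hadj, hw'⟩ := exists_pred hc hw.2
      have hsub2 : G.neighborFinset w ∩ T ⊆ (G.neighborFinset w).erase w' := by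
        intro z hz
        simp only [Finset.mem_inter, hT, Finset.mem_filter] at hz
        refine Finset.mem_erase.mpr ⟨?_, hz.1⟩
        rintro rfl
        omega
      have hw'mem : w' ∈ G.neighborFinset w := by
        rw [SimpleGraph.mem_neighborFinset]; exact hadj.symm
      calc (G.neighborFinset w ∩ T).card ≤ ((G.neighborFinset w).erase w').card :=
            Finset.card_le_card hsub2
        _ = (G.neighborFinset w).card - 1 := Finset.card_erase_of_mem hw'mem
        _ ≤ 3 - 1 := by
            have := hdeg w
            rw [G.card_neighborFinset_eq_degree w]
            omega
        _ = 2 := rfl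
    calc T.card ≤ (S.biUnion (fun w => G.neighborFinset w ∩ T)).card := Finset.card_le_card hsub
      _ ≤ ∑ w ∈ S, (G.neighborFinset w ∩ T).card := Finset.card_biUnion_le
      _ ≤ ∑ w ∈ S, 2 := Finset.sum_le_sum hbound
      _ = 2 * S.card := by rw [Finset.sum_const, smul_eq_mul, mul_comm]
      _ ≤ 2 * (3 * 2 ^ i) := by omega
      _ = 3 * 2 ^ (i + 1) := by ring

lemma ediam_ne_top' {V : Type*} [Fintype V] {G : SimpleGraph V} (hc : G.Connected) :
    G.ediam ≠ ⊤ := by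
  have : Nonempty V := hc.nonempty
  obtain ⟨u, v, huv⟩ := SimpleGraph.exists_edist_eq_ediam_of_finite (G := G)
  rw [← huv]
  exact SimpleGraph.edist_ne_top_iff_reachable.mpr (hc u v)

lemma row_sum {V : Type*} [Fintype V] [DecidableEq V] {G : SimpleGraph V} [DecidableRel G.Adj]
    (hc : G.Connected) (hdeg : ∀ v, G.degree v ≤ 3) (u : V) :
    ∑ v : V, 2 * (1 / 2 : ℝ) ^ G.dist u v ≤ 2 + 3 * G.diam := by
  have hle : ∀ v, G.dist u v ≤ G.diam := fun v =>
    SimpleGraph.dist_le_diam (ediam_ne_top' hc)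
  rw [← Finset.sum_fiberwise_of_maps_to (g := G.dist u) (t := Finset.range (G.diam + 1))
    (fun v _ => Finset.mem_range.mpr (Nat.lt_succ_of_le (hle v)))]
  have hfib : ∀ i ∈ Finset.range (G.diam + 1),
      ∑ v ∈ Finset.univ.filter (fun v => G.dist u v = i), 2 * (1 / 2 : ℝ) ^ G.dist u v
      = (Finset.univ.filter (fun v => G.dist u v = i)).card * (2 * (1 / 2 : ℝ) ^ i) := by
    intro i _
    rw [Finset.sum_congr rfl (fun v hv => by
      rw [(Finset.mem_filter.mp hv).2]), Finset.sum_const, nsmul_eq_mul]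
  rw [Finset.sum_congr rfl hfib, Finset.sum_range_succ']
  have h0 : ((Finset.univ.filter (fun v => G.dist u v = 0)).card : ℝ) * (2 * (1/2:ℝ)^0) ≤ 2 := by
    have : Finset.univ.filter (fun v => G.dist u v = 0) = {u} := by
      ext v
      simp [hc.dist_eq_zero_iff, eq_comm]
    rw [this]; norm_num
  have h1 : ∀ i ∈ Finset.range G.diam,
      ((Finset.univ.filter (fun v => G.dist u v = i + 1)).card : ℝ) * (2 * (1/2:ℝ)^(i+1)) ≤ 3 := by
    intro i _
    have hcard := sphere_card hc hdeg u i
    have hnn : (0:ℝ) < 2 * (1/2:ℝ)^(i+1) := by positivity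
    calc ((Finset.univ.filter (fun v => G.dist u v = i + 1)).card : ℝ) * (2 * (1/2:ℝ)^(i+1))
        ≤ (3 * 2 ^ i : ℕ) * (2 * (1/2:ℝ)^(i+1)) := by
          apply mul_le_mul_of_nonneg_right _ hnn.le
          exact_mod_cast hcard
      _ = 3 := by
          push_cast
          rw [pow_succ]
          field_simp
          ring_nf
          rw [← mul_pow]; norm_num
  calc (∑ i ∈ Finset.range G.diam,
        ((Finset.univ.filter (fun v => G.dist u v = i + 1)).card : ℝ) * (2 * (1/2:ℝ)^(i+1)))
        + ((Finset.univ.filter (fun v => G.dist u v = 0)).card : ℝ) * (2 * (1/2:ℝ)^0)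
      ≤ (∑ i ∈ Finset.range G.diam, (3:ℝ)) + 2 :=
        add_le_add (Finset.sum_le_sum h1) h0
    _ = 2 + 3 * G.diam := by rw [Finset.sum_const, Finset.card_range]; ring


/-- If `G` is connected of order `n`, maximum degree at most 3, and diameter `d`,
then `γ*_{e,f}(G) ≥ n/(2+3d)`. -/

theorem stmt_12 {V : Type*} [Fintype V] (G : SimpleGraph V) [DecidableRel G.Adj]
    (hc : G.Connected) (hsub : Subcubic G) :
    (Fintype.card V : ℝ) / (2 + 3 * (G.diam : ℝ)) ≤ gammaEF G := by
  classical
  have hdeg : ∀ v, G.degree v ≤ 3 := hsub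
  have hpos : (0:ℝ) < 2 + 3 * (G.diam : ℝ) := by positivity
  have hexp_nonneg : ∀ u v : V, 0 ≤ expw G u v := fun u v => by unfold expw; positivity
  apply le_csInf
  · refine ⟨∑ u : V, (1:ℝ), fun _ => 1, ⟨fun u => zero_le_one, fun v => ?_⟩, rfl⟩
    calc (1:ℝ) ≤ expw G v v * 1 := by
          unfold expw; rw [SimpleGraph.dist_self]; norm_num
      _ ≤ ∑ u : V, expw G u v * 1 :=
          Finset.single_le_sum
            (fun u _ => mul_nonneg (hexp_nonneg u v) zero_le_one) (Finset.mem_univ v)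
  · rintro s ⟨x, ⟨hx0, hxf⟩, rfl⟩
    rw [div_le_iff₀ hpos]
    have key : ∀ u : V, ∑ v : V, expw G u v ≤ 2 + 3 * (G.diam:ℝ) := fun u => by
      have h := row_sum hc hdeg u
      unfold expw
      exact h
    calc (Fintype.card V : ℝ) = ∑ _v : V, (1:ℝ) := by simp
      _ ≤ ∑ v : V, ∑ u : V, expw G u v * x u := Finset.sum_le_sum (fun v _ => hxf v)
      _ = ∑ u : V, (∑ v : V, expw G u v) * x u := by
          rw [Finset.sum_comm]
          exact Finset.sum_congr rfl (fun u _ => by rw [Finset.sum_mul])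
      _ ≤ ∑ u : V, (2 + 3 * (G.diam:ℝ)) * x u :=
          Finset.sum_le_sum (fun u _ => mul_le_mul_of_nonneg_right (key u) (hx0 u))
      _ = (∑ u : V, x u) * (2 + 3 * (G.diam:ℝ)) := by rw [← Finset.mul_sum]; ring
end

section
/- If G is a connected subcubic graph of order n, then γ*_{e,f}(G) ≥ (1/6)(√(2n + 49/36) + 7/6). -/
open SimpleGraph Finset

variable {V : Type*}

section AuxStmt14

open Finset

lemma two_zpow_le_of_le {m n : ℤ} (h : m ≤ n) : (2:ℝ) ^ m ≤ 2 ^ n :=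
  zpow_le_zpow_right₀ one_le_two h

lemma two_zpow_add (m n : ℤ) : (2:ℝ) ^ (m + n) = 2 ^ m * 2 ^ n :=
  zpow_add₀ two_ne_zero m n

lemma two_zpow_pos (m : ℤ) : (0:ℝ) < 2 ^ m := zpow_pos two_pos m

/-- The key arithmetic inequality for the path bound. -/
lemma key_sum (d a b : ℕ) (f : ℕ → ℕ)
    (hd : d ≤ a + b) (had : a ≤ b + d)
    (h1 : ∀ i, a ≤ f i + i)
    (h2 : ∀ i, i ≤ d → b + i ≤ f i + d) :
    ∑ i ∈ Finset.range (d+1), (2:ℝ) ^ (-(f i : ℤ)) ≤ 3 - 2 ^ (-(a:ℤ)) - 2 ^ (-(b:ℤ)) := by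
  obtain ⟨c, hc⟩ : ∃ c : ℤ, c = (d : ℤ) - b := ⟨_, rfl⟩
  obtain ⟨m, hm⟩ : ∃ m : ℤ, m = ((a : ℤ) + c + 1) / 2 := ⟨_, rfl⟩
  obtain ⟨M, hM0, hMcases⟩ : ∃ M : ℤ, 0 ≤ M ∧ ((M = m ∧ 0 ≤ m) ∨ (M = 0 ∧ m < 0)) := by
    rcases le_or_gt 0 m with h | h
    · exact ⟨m, h, Or.inl ⟨rfl, h⟩⟩
    · exact ⟨0, le_refl 0, Or.inr ⟨rfl, h⟩⟩
  have hMd : M ≤ (d:ℤ) := by omega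
  obtain ⟨N, hNM⟩ : ∃ N : ℕ, (N : ℤ) = M := ⟨M.toNat, Int.toNat_of_nonneg hM0⟩
  have hNd : N ≤ d := by omega
  have hterm : ∀ i ∈ Finset.range (d+1), (2:ℝ) ^ (-(f i : ℤ)) ≤
      (if i ≤ N then (2:ℝ) ^ ((i:ℤ) - a) else (2:ℝ) ^ (c - (i:ℤ))) := by
    intro i hi
    rw [Finset.mem_range] at hi
    split_ifs with h
    · exact two_zpow_le_of_le (by have := h1 i; omega)
    · exact two_zpow_le_of_le (by have := h2 i (by omega); omega)
  have hsplit : ∑ i ∈ Finset.range (d+1),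
      (if i ≤ N then (2:ℝ) ^ ((i:ℤ) - a) else (2:ℝ) ^ (c - (i:ℤ)))
      = (∑ i ∈ Finset.range (N+1), (2:ℝ) ^ ((i:ℤ) - a))
        + ∑ i ∈ Finset.Ico (N+1) (d+1), (2:ℝ) ^ (c - (i:ℤ)) := by
    rw [Finset.range_eq_Ico, ← Finset.sum_Ico_consecutive _ (Nat.zero_le (N+1)) (by omega),
        ← Finset.range_eq_Ico]
    congr 1
    · refine Finset.sum_congr rfl fun i hi => ?_
      rw [Finset.mem_range] at hi
      rw [if_pos (by omega)]
    · refine Finset.sum_congr rfl fun i hi => ?_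
      rw [Finset.mem_Ico] at hi
      rw [if_neg (by omega)]
  have hA : (∑ i ∈ Finset.range (N+1), (2:ℝ) ^ ((i:ℤ) - a))
      = 2 ^ ((N:ℤ) + 1 - a) - 2 ^ (-(a:ℤ)) := by
    have step : ∀ i : ℕ, (2:ℝ) ^ ((i:ℤ) - a) = (2:ℝ) ^ (-(a:ℤ)) * (2:ℝ) ^ i := by
      intro i
      rw [← zpow_natCast (2:ℝ) i, ← two_zpow_add, sub_eq_neg_add]
    simp only [step]
    rw [← Finset.mul_sum, geom_sum_eq (by norm_num : (2:ℝ) ≠ 1)]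
    have : ((2:ℝ) ^ (N+1) - 1) / (2 - 1) = (2:ℝ) ^ ((N:ℤ)+1) - 1 := by
      rw [← zpow_natCast (2:ℝ) (N+1)]
      push_cast
      ring
    rw [this, mul_sub, mul_one, ← two_zpow_add]
    ring_nf
  have hB : (∑ i ∈ Finset.Ico (N+1) (d+1), (2:ℝ) ^ (c - (i:ℤ)))
      = 2 ^ (c - (N:ℤ)) - 2 ^ (-(b:ℤ)) := by
    have step : ∀ i : ℕ, (2:ℝ) ^ (c - (i:ℤ)) = (2:ℝ) ^ c * ((2:ℝ)⁻¹) ^ i := by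
      intro i
      rw [sub_eq_add_neg, two_zpow_add]
      congr 1
      rw [inv_pow, ← zpow_natCast (2:ℝ) i, ← zpow_neg]
    simp only [step]
    rw [← Finset.mul_sum, geom_sum_Ico (by norm_num : (2:ℝ)⁻¹ ≠ 1) (by omega)]
    have e1 : ((2:ℝ)⁻¹) ^ (d+1) = 2 ^ (-((d:ℤ)+1)) := by
      rw [inv_pow, ← zpow_natCast (2:ℝ) (d+1), ← zpow_neg,
        show ((d:ℤ)+1) = ((d+1:ℕ):ℤ) by push_cast; ring]
    have e2 : ((2:ℝ)⁻¹) ^ (N+1) = 2 ^ (-((N:ℤ)+1)) := by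
      rw [inv_pow, ← zpow_natCast (2:ℝ) (N+1), ← zpow_neg,
        show ((N:ℤ)+1) = ((N+1:ℕ):ℤ) by push_cast; ring]
    rw [e1, e2]
    have expand : ((2:ℝ) ^ (-((d:ℤ)+1)) - 2 ^ (-((N:ℤ)+1))) / (2⁻¹ - 1)
        = 2 ^ (1 - ((N:ℤ)+1)) - 2 ^ (1 - ((d:ℤ)+1)) := by
      rw [show (1:ℤ) - ((N:ℤ)+1) = 1 + -((N:ℤ)+1) by ring,
          show (1:ℤ) - ((d:ℤ)+1) = 1 + -((d:ℤ)+1) by ring,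
          two_zpow_add, two_zpow_add]
      have h1 : (2:ℝ) ^ (1:ℤ) = 2 := zpow_one 2
      rw [h1]
      field_simp
      ring
    rw [expand, mul_sub, ← two_zpow_add, ← two_zpow_add,
      show c + (1 - ((N:ℤ)+1)) = c - (N:ℤ) by ring,
      show c + (1 - ((d:ℤ)+1)) = -(b:ℤ) by omega, step N]
  have hfin : (2:ℝ) ^ ((N:ℤ) + 1 - a) + 2 ^ (c - (N:ℤ)) ≤ 3 := by
    rcases hMcases with ⟨hMe, hm0⟩ | ⟨hMe, hm0⟩
    · -- M = m; use 2m ≈ a + c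
      have hcase : ((N:ℤ) + 1 - a = (c - N) + 1 ∧ c - (N:ℤ) ≤ 0)
          ∨ ((N:ℤ) + 1 - a = (c - N) + 2 ∧ c - (N:ℤ) ≤ -1) := by omega
      rcases hcase with ⟨he, hle⟩ | ⟨he, hle⟩
      · rw [he, two_zpow_add]
        have : (2:ℝ) ^ (c - (N:ℤ)) ≤ 1 := by
          have := two_zpow_le_of_le hle
          simpa using this
        have hpos := two_zpow_pos (c - (N:ℤ))
        rw [zpow_one]
        nlinarith
      · rw [he, two_zpow_add]
        have h0 : (2:ℝ) ^ (c - (N:ℤ)) ≤ 2 ^ (-1 : ℤ) := two_zpow_le_of_le hle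
        have hx : (2:ℝ) ^ (c - (N:ℤ)) ≤ 1/2 := by
          refine le_trans h0 (le_of_eq ?_)
          rw [zpow_neg, zpow_one]
          norm_num
        have hpos := two_zpow_pos (c - (N:ℤ))
        have h4 : (2:ℝ) ^ (2:ℤ) = 4 := by
          rw [show (2:ℤ) = (2:ℕ) from rfl, zpow_natCast]
          norm_num
        rw [h4]
        nlinarith
    · -- M = 0
      have e1 : (N:ℤ) + 1 - a ≤ 1 := by omega
      have e2 : c - (N:ℤ) ≤ 0 := by omega
      have g1 := two_zpow_le_of_le e1
      have g2 := two_zpow_le_of_le e2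
      have : (2:ℝ) ^ (1:ℤ) = 2 := zpow_one 2
      rw [this] at g1
      have : (2:ℝ) ^ (0:ℤ) = 1 := zpow_zero 2
      rw [this] at g2
      linarith
  calc ∑ i ∈ Finset.range (d+1), (2:ℝ) ^ (-(f i : ℤ))
      ≤ ∑ i ∈ Finset.range (d+1),
        (if i ≤ N then (2:ℝ) ^ ((i:ℤ) - a) else (2:ℝ) ^ (c - (i:ℤ))) :=
        Finset.sum_le_sum hterm
    _ = (2 ^ ((N:ℤ) + 1 - a) - 2 ^ (-(a:ℤ))) + (2 ^ (c - (N:ℤ)) - 2 ^ (-(b:ℤ))) := by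
        rw [hsplit, hA, hB]
    _ ≤ 3 - 2 ^ (-(a:ℤ)) - 2 ^ (-(b:ℤ)) := by linarith

variable {V : Type*}

lemma dist_getVert_le (G : SimpleGraph V) (hc : G.Connected) {x y : V} (q : G.Walk x y) :
    ∀ i, G.dist x (q.getVert i) ≤ i := by
  induction q with
  | nil =>
    intro i
    cases i <;> simp [SimpleGraph.Walk.getVert, SimpleGraph.dist_self]
  | @cons u w y h q ih =>
    intro i
    cases i with
    | zero => simp [SimpleGraph.Walk.getVert_zero, SimpleGraph.dist_self]
    | succ i =>
      rw [SimpleGraph.Walk.getVert_cons_succ]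
      have t1 : G.dist u (q.getVert i) ≤ G.dist u w + G.dist w (q.getVert i) :=
        hc.dist_triangle
      have t2 : G.dist u w ≤ 1 := by
        have := SimpleGraph.dist_le h.toWalk
        simpa using this
      have := ih i
      omega

lemma dist_getVert_le' (G : SimpleGraph V) (hc : G.Connected) {x y : V} (q : G.Walk x y) :
    ∀ i, i ≤ q.length → G.dist (q.getVert i) y + i ≤ q.length := by
  induction q with
  | nil =>
    intro i hi
    simp only [SimpleGraph.Walk.length_nil, Nat.le_zero] at hi
    subst hi
    simp [SimpleGraph.Walk.getVert, SimpleGraph.dist_self]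
  | @cons u w y h q ih =>
    intro i hi
    cases i with
    | zero =>
      simp only [SimpleGraph.Walk.getVert_zero, SimpleGraph.Walk.length_cons, Nat.add_zero]
      have t1 : G.dist u y ≤ G.dist u w + G.dist w y := hc.dist_triangle
      have t2 : G.dist u w ≤ 1 := by
        have := SimpleGraph.dist_le h.toWalk
        simpa using this
      have t3 : G.dist w y ≤ q.length := SimpleGraph.dist_le q
      omega
    | succ i =>
      rw [SimpleGraph.Walk.getVert_cons_succ]
      simp only [SimpleGraph.Walk.length_cons] at hi ⊢
      have := ih i (by omega)
      omega

lemma exists_pred_vert (G : SimpleGraph V) (hc : G.Connected) {u v : V} {k : ℕ}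
    (h : G.dist u v = k + 1) : ∃ w, G.Adj w v ∧ G.dist u w = k := by
  obtain ⟨p, hp⟩ := (hc u v).exists_walk_length_eq_dist
  rw [h] at hp
  refine ⟨p.getVert k, ?_, ?_⟩
  · have hadj := p.adj_getVert_succ (by omega : k < p.length)
    have hv : p.getVert (k+1) = v := by
      rw [← hp]; exact p.getVert_length
    rwa [hv] at hadj
  · have hle : G.dist u (p.getVert k) ≤ k := dist_getVert_le G hc p k
    have hge : k + 1 ≤ G.dist u (p.getVert k) + 1 := by
      have t1 : G.dist u v ≤ G.dist u (p.getVert k) + G.dist (p.getVert k) v :=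
        hc.dist_triangle
      have t2 : G.dist (p.getVert k) v + k ≤ p.length :=
        dist_getVert_le' G hc p k (by omega)
      omega
    omega

open Classical in
lemma sphere_card_le (G : SimpleGraph V) [Fintype V] [DecidableRel G.Adj] (hc : G.Connected)
    (hsub : Subcubic G) (u : V) :
    ∀ k : ℕ, (Finset.univ.filter (fun v => G.dist u v = k + 1)).card ≤ 3 * 2 ^ k := by
  intro k
  induction k with
  | zero =>
    have hsub1 : (Finset.univ.filter (fun v => G.dist u v = 0 + 1)) ⊆ G.neighborFinset u := by
      intro v hv
      rw [Finset.mem_filter] at hv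
      rw [SimpleGraph.mem_neighborFinset]
      exact SimpleGraph.dist_eq_one_iff_adj.mp hv.2
    calc (Finset.univ.filter (fun v => G.dist u v = 0 + 1)).card
        ≤ (G.neighborFinset u).card := Finset.card_le_card hsub1
      _ = G.degree u := G.card_neighborFinset_eq_degree u
      _ ≤ 3 * 2 ^ 0 := by simpa using hsub u
  | succ k ih =>
    set S2 := Finset.univ.filter (fun v => G.dist u v = k + 2) with hS2
    set S1 := Finset.univ.filter (fun v => G.dist u v = k + 1) with hS1
    have hpred : ∀ v : V, G.dist u v = k + 2 → ∃ w, G.Adj w v ∧ G.dist u w = k + 1 :=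
      fun v hv => exists_pred_vert G hc hv
    set φ : V → V := fun v =>
      if h : G.dist u v = k + 2 then (hpred v h).choose else v with hφ
    have hφspec : ∀ v ∈ S2, G.Adj (φ v) v ∧ G.dist u (φ v) = k + 1 := by
      intro v hv
      rw [hS2, Finset.mem_filter] at hv
      rw [hφ]
      simp only [dif_pos hv.2]
      exact ⟨(hpred v hv.2).choose_spec.1, (hpred v hv.2).choose_spec.2⟩
    have hmaps : ∀ v ∈ S2, φ v ∈ S1 := by
      intro v hv
      rw [hS1, Finset.mem_filter]
      exact ⟨Finset.mem_univ _, (hφspec v hv).2⟩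
    have hcard : S2.card = ∑ w ∈ S1, (S2.filter (fun v => φ v = w)).card :=
      Finset.card_eq_sum_card_fiberwise hmaps
    have hfiber : ∀ w ∈ S1, (S2.filter (fun v => φ v = w)).card ≤ 2 := by
      intro w hw
      rw [hS1, Finset.mem_filter] at hw
      obtain ⟨w₀, hw₀adj, hw₀dist⟩ := exists_pred_vert G hc hw.2
      have hsubf : S2.filter (fun v => φ v = w) ⊆ (G.neighborFinset w).erase w₀ := by
        intro v hv
        rw [Finset.mem_filter] at hv
        obtain ⟨hv2, hveq⟩ := hv
        have hspec := hφspec v hv2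
        rw [hveq] at hspec
        rw [Finset.mem_erase, SimpleGraph.mem_neighborFinset]
        constructor
        · intro hcontra
          rw [hS2, Finset.mem_filter] at hv2
          rw [hcontra] at hv2
          omega
        · exact hspec.1
      have hw₀mem : w₀ ∈ G.neighborFinset w := by
        rw [SimpleGraph.mem_neighborFinset]
        exact hw₀adj.symm
      calc (S2.filter (fun v => φ v = w)).card
          ≤ ((G.neighborFinset w).erase w₀).card := Finset.card_le_card hsubf
        _ = (G.neighborFinset w).card - 1 := Finset.card_erase_of_mem hw₀mem
        _ ≤ 3 - 1 := by
            have : (G.neighborFinset w).card = G.degree w := G.card_neighborFinset_eq_degree w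
            have := hsub w
            omega
        _ ≤ 2 := by omega
    calc S2.card = ∑ w ∈ S1, (S2.filter (fun v => φ v = w)).card := hcard
      _ ≤ ∑ _w ∈ S1, 2 := Finset.sum_le_sum hfiber
      _ = 2 * S1.card := by rw [Finset.sum_const, smul_eq_mul, mul_comm]
      _ ≤ 2 * (3 * 2 ^ k) := by omega
      _ = 3 * 2 ^ (k + 1) := by ring

open Classical in
lemma sum_expw_le (G : SimpleGraph V) [Fintype V] [DecidableRel G.Adj] (hc : G.Connected)
    (hsub : Subcubic G) (u : V) (d : ℕ) (hd : ∀ v, G.dist u v ≤ d) :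
    ∑ v : V, expw G u v ≤ 2 + 3 * d := by
  have hmaps : ∀ v ∈ (Finset.univ : Finset V), G.dist u v ∈ Finset.range (d+1) := by
    intro v _
    rw [Finset.mem_range]
    exact Nat.lt_succ_of_le (hd v)
  rw [← Finset.sum_fiberwise_of_maps_to hmaps (fun v => expw G u v)]
  have hinner : ∀ k ∈ Finset.range (d+1),
      (∑ v ∈ Finset.univ.filter (fun v => G.dist u v = k), expw G u v)
      = ((Finset.univ.filter (fun v => G.dist u v = k)).card : ℝ) * (2 * (1/2:ℝ)^k) := by
    intro k _
    rw [Finset.sum_congr rfl (fun v hv => ?_), Finset.sum_const, nsmul_eq_mul]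
    rw [Finset.mem_filter] at hv
    rw [expw, hv.2]
  rw [Finset.sum_congr rfl hinner]
  rw [Finset.sum_range_succ']
  have hzero : ((Finset.univ.filter (fun v => G.dist u v = 0)).card : ℝ) * (2 * (1/2:ℝ)^0) ≤ 2 := by
    have hsub0 : Finset.univ.filter (fun v => G.dist u v = 0) ⊆ {u} := by
      intro v hv
      rw [Finset.mem_filter] at hv
      rw [Finset.mem_singleton]
      exact (hc.dist_eq_zero_iff.mp hv.2).symm
    have h1 : (Finset.univ.filter (fun v => G.dist u v = 0)).card ≤ 1 := by
      have := Finset.card_le_card hsub0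
      rwa [Finset.card_singleton] at this
    have h1' : ((Finset.univ.filter (fun v => G.dist u v = 0)).card : ℝ) ≤ 1 := by
      exact_mod_cast h1
    have he : (2:ℝ) * (1/2:ℝ)^(0:ℕ) = 2 := by norm_num
    rw [he]
    linarith
  have hstep : ∀ k ∈ Finset.range d,
      ((Finset.univ.filter (fun v => G.dist u v = k + 1)).card : ℝ) * (2 * (1/2:ℝ)^(k+1)) ≤ 3 := by
    intro k _
    have hcard := sphere_card_le G hc hsub u k
    have hcard' : ((Finset.univ.filter (fun v => G.dist u v = k + 1)).card : ℝ) ≤ 3 * 2 ^ k := by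
      exact_mod_cast hcard
    have hpos : (0:ℝ) < 2 * (1/2:ℝ)^(k+1) := by positivity
    calc ((Finset.univ.filter (fun v => G.dist u v = k + 1)).card : ℝ) * (2 * (1/2:ℝ)^(k+1))
        ≤ (3 * 2 ^ k) * (2 * (1/2:ℝ)^(k+1)) := by
          exact mul_le_mul_of_nonneg_right hcard' hpos.le
      _ = 3 * ((2:ℝ) ^ (k+1) * ((1:ℝ)/2) ^ (k+1)) := by ring
      _ = 3 := by rw [← mul_pow]; norm_num
  calc (∑ k ∈ Finset.range d,
        ((Finset.univ.filter (fun v => G.dist u v = k + 1)).card : ℝ) * (2 * (1/2:ℝ)^(k+1)))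
        + ((Finset.univ.filter (fun v => G.dist u v = 0)).card : ℝ) * (2 * (1/2:ℝ)^0)
      ≤ (∑ _k ∈ Finset.range d, (3:ℝ)) + 2 := add_le_add (Finset.sum_le_sum hstep) hzero
    _ = 2 + 3 * d := by
        rw [Finset.sum_const, nsmul_eq_mul, Finset.card_range]
        push_cast
        ring

end AuxStmt14

/-- If `G` is a connected subcubic graph of order `n`, then
`γ*_{e,f}(G) ≥ (1/6)(√(2n + 49/36) + 7/6)`. -/
theorem stmt_14 {V : Type*} [Fintype V] (G : SimpleGraph V) [DecidableRel G.Adj]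
    (hc : G.Connected) (hsub : Subcubic G) :
    (1 / 6 : ℝ) * (Real.sqrt (2 * (Fintype.card V : ℝ) + 49 / 36) + 7 / 6) ≤ gammaEF G := by
  classical
  have hneV : Nonempty V := hc.nonempty
  set n := Fintype.card V with hn
  -- diameter
  obtain ⟨u₀, v₀, d, hd0, hdle⟩ : ∃ (u₀ v₀ : V) (d : ℕ),
      G.dist u₀ v₀ = d ∧ ∀ u v : V, G.dist u v ≤ d := by
    obtain ⟨pr, -, hpr⟩ := Finset.exists_mem_eq_sup (Finset.univ : Finset (V × V))
      Finset.univ_nonempty (fun p : V × V => G.dist p.1 p.2)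
    exact ⟨pr.1, pr.2, _, hpr.symm, fun u v =>
      Finset.le_sup (f := fun p : V × V => G.dist p.1 p.2) (Finset.mem_univ (u, v))⟩
  obtain ⟨p, hp⟩ := hc.exists_walk_length_eq_dist u₀ v₀
  rw [hd0] at hp
  -- main bound for any feasible x
  have main : ∀ x : V → ℝ, FracFeasible G x →
      (1 / 6 : ℝ) * (Real.sqrt (2 * (n : ℝ) + 49 / 36) + 7 / 6) ≤ ∑ u : V, x u := by
    intro x hx
    set S := ∑ u : V, x u with hS
    have hexp : ∀ u w : V, expw G u w = 2 * (2:ℝ) ^ (-(G.dist u w : ℤ)) := by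
      intro u w
      rw [expw]
      congr 1
      rw [one_div, inv_pow, ← zpow_natCast, ← zpow_neg]
    have keybound : ∀ u : V,
        (∑ i ∈ Finset.range (d+1), expw G u (p.getVert i)) + expw G u u₀ + expw G u v₀ ≤ 6 := by
      intro u
      have hk := key_sum d (G.dist u u₀) (G.dist u v₀) (fun i => G.dist u (p.getVert i))
        (by
          have t1 : G.dist u₀ v₀ ≤ G.dist u₀ u + G.dist u v₀ := hc.dist_triangle
          have t2 : G.dist u₀ u = G.dist u u₀ := SimpleGraph.dist_comm
          omega)
        (by
          have t1 : G.dist u u₀ ≤ G.dist u v₀ + G.dist v₀ u₀ := hc.dist_triangle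
          have t2 : G.dist v₀ u₀ = G.dist u₀ v₀ := SimpleGraph.dist_comm
          omega)
        (by
          intro i
          show G.dist u u₀ ≤ G.dist u (p.getVert i) + i
          have t1 : G.dist u u₀ ≤ G.dist u (p.getVert i) + G.dist (p.getVert i) u₀ :=
            hc.dist_triangle
          have t2 : G.dist (p.getVert i) u₀ = G.dist u₀ (p.getVert i) := SimpleGraph.dist_comm
          have t3 : G.dist u₀ (p.getVert i) ≤ i := dist_getVert_le G hc p i
          omega)
        (by
          intro i hi
          show G.dist u v₀ + i ≤ G.dist u (p.getVert i) + d
          have t1 : G.dist u v₀ ≤ G.dist u (p.getVert i) + G.dist (p.getVert i) v₀ :=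
            hc.dist_triangle
          have t2 : G.dist (p.getVert i) v₀ + i ≤ p.length :=
            dist_getVert_le' G hc p i (by omega)
          omega)
      simp only [hexp]
      rw [← Finset.mul_sum]
      have ha := two_zpow_pos (-(G.dist u u₀ : ℤ))
      have hb := two_zpow_pos (-(G.dist u v₀ : ℤ))
      linarith
    have boundB : (d : ℝ) + 3 ≤ 6 * S := by
      calc (d : ℝ) + 3 = (∑ _i ∈ Finset.range (d+1), (1:ℝ)) + (1 + 1) := by
            rw [Finset.sum_const, nsmul_eq_mul, Finset.card_range]
            push_cast
            ring
        _ ≤ (∑ i ∈ Finset.range (d+1), ∑ u : V, expw G u (p.getVert i) * x u)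
            + ((∑ u : V, expw G u u₀ * x u) + (∑ u : V, expw G u v₀ * x u)) := by
            refine add_le_add (Finset.sum_le_sum fun i _ => hx.2 _) (add_le_add (hx.2 u₀) (hx.2 v₀))
        _ = ∑ u : V, ((∑ i ∈ Finset.range (d+1), expw G u (p.getVert i))
              + expw G u u₀ + expw G u v₀) * x u := by
            rw [Finset.sum_comm, ← Finset.sum_add_distrib, ← Finset.sum_add_distrib]
            refine Finset.sum_congr rfl fun u _ => ?_
            rw [← Finset.sum_mul]
            ring
        _ ≤ ∑ u : V, 6 * x u :=
            Finset.sum_le_sum fun u _ => mul_le_mul_of_nonneg_right (keybound u) (hx.1 u)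
        _ = 6 * S := by rw [← Finset.mul_sum]
    have boundA : (n : ℝ) ≤ (2 + 3 * d) * S := by
      calc (n : ℝ) = ∑ _v : V, (1:ℝ) := by
            rw [Finset.sum_const, nsmul_eq_mul, mul_one, hn]
            rfl
        _ ≤ ∑ v : V, ∑ u : V, expw G u v * x u := Finset.sum_le_sum fun v _ => hx.2 v
        _ = ∑ u : V, (∑ v : V, expw G u v) * x u := by
            rw [Finset.sum_comm]
            exact Finset.sum_congr rfl fun u _ => (Finset.sum_mul _ _ _).symm
        _ ≤ ∑ u : V, (2 + 3 * (d:ℝ)) * x u := by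
            refine Finset.sum_le_sum fun u _ => mul_le_mul_of_nonneg_right ?_ (hx.1 u)
            exact sum_expw_le G hc hsub u d (fun v => hdle u v)
        _ = (2 + 3 * d) * S := by rw [← Finset.mul_sum]
    have hd0' : (0:ℝ) ≤ (d:ℝ) := Nat.cast_nonneg d
    have hShalf : (1:ℝ)/2 ≤ S := by linarith
    have hmul : (2 + 3 * (d:ℝ)) * S ≤ (18 * S - 7) * S :=
      mul_le_mul_of_nonneg_right (by linarith) (by linarith)
    have hsq : 2 * (n:ℝ) + 49/36 ≤ (6 * S - 7/6)^2 := by nlinarith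
    have hsqrt : Real.sqrt (2 * (n:ℝ) + 49/36) ≤ 6 * S - 7/6 := by
      have hnn : (0:ℝ) ≤ 6 * S - 7/6 := by linarith
      calc Real.sqrt (2 * (n:ℝ) + 49/36) ≤ Real.sqrt ((6 * S - 7/6)^2) :=
            Real.sqrt_le_sqrt hsq
        _ = 6 * S - 7/6 := Real.sqrt_sq hnn
    linarith
  -- feasibility of the all-ones vector
  have hfeas1 : FracFeasible G (fun _ => (1:ℝ)) := by
    constructor
    · intro u; norm_num
    · intro v
      have hterm : expw G v v * 1 ≤ ∑ u : V, expw G u v * 1 := by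
        refine Finset.single_le_sum (f := fun u => expw G u v * 1) (fun u _ => ?_) (Finset.mem_univ v)
        show (0:ℝ) ≤ expw G u v * 1
        simp only [expw]
        positivity
      have hval : expw G v v = 2 := by
        rw [expw, SimpleGraph.dist_self]
        norm_num
      rw [hval] at hterm
      linarith
  unfold gammaEF
  refine le_csInf ⟨∑ _u : V, (1:ℝ), fun _ => (1:ℝ), hfeas1, rfl⟩ ?_
  rintro s ⟨x, hx, rfl⟩
  exact main x hx
end

section
/- For every positive integer n and real d > 0, max{(d+3)/6, n/(2+3d)} ≥ (1/6)(√(2n + 49/36) + 7/6). -/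
open SimpleGraph Finset

variable {V : Type*}

/-- For every positive integer `n` and real `d > 0`,
`max{(d+3)/6, n/(2+3d)} ≥ (1/6)(√(2n + 49/36) + 7/6)`. -/
theorem stmt_15 (n : ℕ) (hn : 0 < n) (d : ℝ) (hd : 0 < d) :
    (1 / 6 : ℝ) * (Real.sqrt (2 * (n : ℝ) + 49 / 36) + 7 / 6) ≤
      max ((d + 3) / 6) ((n : ℝ) / (2 + 3 * d)) := by
  set s := Real.sqrt (2 * (n : ℝ) + 49 / 36) with hs
  have hn1 : (1 : ℝ) ≤ n := by exact_mod_cast hn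
  have hpos : (0 : ℝ) ≤ 2 * n + 49 / 36 := by positivity
  have hs2 : s ^ 2 = 2 * n + 49 / 36 := Real.sq_sqrt hpos
  have hs0 : 0 ≤ s := Real.sqrt_nonneg _
  have hsge : 7 / 6 < s := by nlinarith
  rcases le_total (s + 7 / 6) (d + 3) with h | h
  · exact le_max_of_le_left (by linarith)
  · refine le_max_of_le_right ?_
    rw [le_div_iff₀ (by linarith)]
    nlinarith [mul_nonneg (by linarith : (0:ℝ) ≤ s + 7/6) (by linarith : (0:ℝ) ≤ s - 11/6 - d)]
end

section
/- If T' is a subtree of a subcubic tree T, then γ_e(T') ≤ γ_e(T). -/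
open SimpleGraph Finset
set_option linter.unusedSectionVars false
set_option maxHeartbeats 1000000

variable {V : Type*}

namespace ExpAux
attribute [local instance 10] Classical.propDecidable

variable {W : Type*} [DecidableEq W] {H : SimpleGraph W}

lemma path_eq_path (ha : H.IsAcyclic) {u v : W} {p q : H.Walk u v}
    (hp : p.IsPath) (hq : q.IsPath) : p = q :=
  congrArg Subtype.val (ha.path_unique ⟨p, hp⟩ ⟨q, hq⟩)

noncomputable def pth (hc : H.Connected) (u v : W) : H.Walk u v :=
  (hc.exists_walk_length_eq_dist u v).choose

lemma pth_length (hc : H.Connected) (u v : W) :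
    (pth hc u v).length = H.dist u v :=
  (hc.exists_walk_length_eq_dist u v).choose_spec

lemma pth_isPath (hc : H.Connected) (u v : W) : (pth hc u v).IsPath :=
  SimpleGraph.Walk.isPath_of_length_eq_dist _ (pth_length hc u v)

lemma eq_pth (ha : H.IsAcyclic) (hc : H.Connected) {u v : W} {p : H.Walk u v}
    (hp : p.IsPath) : p = pth hc u v :=
  path_eq_path ha hp (pth_isPath hc u v)

lemma length_of_isPath (ha : H.IsAcyclic) (hc : H.Connected) {u v : W} {p : H.Walk u v}
    (hp : p.IsPath) : p.length = H.dist u v := by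
  rw [eq_pth ha hc hp, pth_length]

lemma dist_add_of_mem_support (ha : H.IsAcyclic) (hc : H.Connected) {u v w : W}
    (h : w ∈ (pth hc u v).support) : H.dist u v = H.dist u w + H.dist w v := by
  have h1 : ((pth hc u v).takeUntil w h).length = H.dist u w :=
    length_of_isPath ha hc ((pth_isPath hc u v).takeUntil h)
  have h2 : ((pth hc u v).dropUntil w h).length = H.dist w v :=
    length_of_isPath ha hc ((pth_isPath hc u v).dropUntil h)
  have h3 := congrArg SimpleGraph.Walk.length ((pth hc u v).take_spec h)
  rw [SimpleGraph.Walk.length_append, h1, h2, pth_length] at h3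
  omega

lemma pth_takeUntil (ha : H.IsAcyclic) (hc : H.Connected) {u v w : W}
    (h : w ∈ (pth hc u v).support) : pth hc u w = (pth hc u v).takeUntil w h :=
  (eq_pth ha hc ((pth_isPath hc u v).takeUntil h)).symm

lemma pth_dropUntil (ha : H.IsAcyclic) (hc : H.Connected) {u v w : W}
    (h : w ∈ (pth hc u v).support) : pth hc w v = (pth hc u v).dropUntil w h :=
  (eq_pth ha hc ((pth_isPath hc u v).dropUntil h)).symm


/-- `v` is "visible" from `u`: `v ∈ D` and the unique path from `u` to `v`
meets `D` only in `v`. -/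
def Good (hc : H.Connected) (D : Finset W) (u v : W) : Prop :=
  v ∈ D ∧ ∀ w ∈ (pth hc u v).support, w ∈ D → w = v

lemma halfPow_mdist (ha : H.IsAcyclic) (hc : H.Connected) (D : Finset W) (u v : W) :
    halfPow (mdist H D u v) =
      if Good hc D u v then 2 * (1 / 2 : ℝ) ^ (H.dist u v) else 0 := by
  by_cases hg : Good hc D u v
  · rw [if_pos hg]
    have h1 : mdist H D u v = (H.dist u v : ℕ∞) := by
      apply le_antisymm
      · apply sInf_le
        exact ⟨pth hc u v, ⟨pth_isPath hc u v, hg.1, hg.2⟩, by simp [pth_length]⟩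
      · apply le_sInf
        rintro x ⟨p, ⟨hp, -, -⟩, rfl⟩
        simp [length_of_isPath ha hc hp]
    rw [h1, halfPow]
    simp
  · rw [if_neg hg]
    have h1 : mdist H D u v = ⊤ := by
      rw [mdist]
      refine le_antisymm le_top (le_sInf ?_)
      rintro x ⟨p, ⟨hp, h2, h3⟩, rfl⟩
      exact absurd ⟨h2, by rw [← eq_pth ha hc hp]; exact h3⟩ hg
    rw [h1, halfPow]
    simp

lemma wblock_eq (ha : H.IsAcyclic) (hc : H.Connected) (D : Finset W) (u : W) :
    wblock H D u =
      ∑ v ∈ D, if Good hc D u v then 2 * (1 / 2 : ℝ) ^ (H.dist u v) else 0 :=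
  Finset.sum_congr rfl fun v _ => halfPow_mdist ha hc D u v

lemma pth_self (ha : H.IsAcyclic) (hc : H.Connected) (u : W) :
    pth hc u u = SimpleGraph.Walk.nil :=
  (eq_pth ha hc SimpleGraph.Walk.IsPath.nil).symm

lemma good_self (ha : H.IsAcyclic) (hc : H.Connected) {D : Finset W} {u : W} (hu : u ∈ D) :
    Good hc D u u := by
  refine ⟨hu, ?_⟩
  rw [pth_self ha hc]
  intro w hw _
  simpa using hw

lemma one_le_wblock_self (ha : H.IsAcyclic) (hc : H.Connected) {D : Finset W} {u : W}
    (hu : u ∈ D) : (1 : ℝ) ≤ wblock H D u := by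
  rw [wblock_eq ha hc]
  have h1 : (1 : ℝ) ≤ if Good hc D u u then 2 * (1 / 2 : ℝ) ^ (H.dist u u) else 0 := by
    rw [if_pos (good_self ha hc hu), SimpleGraph.dist_self]
    norm_num
  refine le_trans h1 (Finset.single_le_sum (f := fun v =>
    if Good hc D u v then 2 * (1 / 2 : ℝ) ^ (H.dist u v) else 0) (fun v _ => ?_) hu)
  by_cases h : Good hc D u v <;> simp [h] <;> positivity

lemma isPath_append {u v w : W} {p : H.Walk u v} {q : H.Walk v w}
    (hp : p.IsPath) (hq : q.IsPath)
    (hint : ∀ y, y ∈ p.support → y ∈ q.support → y = v) :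
    (p.append q).IsPath := by
  induction p with
  | nil => simpa using hq
  | cons hadj p' ih =>
    rw [SimpleGraph.Walk.cons_append, SimpleGraph.Walk.cons_isPath_iff]
    rw [SimpleGraph.Walk.cons_isPath_iff] at hp
    refine ⟨ih hp.1 hq (fun y hy1 hy2 => hint y
      (by rw [SimpleGraph.Walk.support_cons]; exact List.mem_cons_of_mem _ hy1) hy2), ?_⟩
    rw [SimpleGraph.Walk.mem_support_append_iff]
    rintro (h | h)
    · exact hp.2 h
    · have h2 := hint _ (by simp) h
      exact hp.2 (by rw [h2]; exact p'.end_mem_support)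

lemma pth_append (ha : H.IsAcyclic) (hc : H.Connected) {u v w : W}
    (h : H.dist u w = H.dist u v + H.dist v w) :
    ((pth hc u v).append (pth hc v w)) = pth hc u w := by
  apply eq_pth ha hc
  apply SimpleGraph.Walk.isPath_of_length_eq_dist
  rw [SimpleGraph.Walk.length_append, pth_length, pth_length, h]

lemma mem_support_of_dist_add (ha : H.IsAcyclic) (hc : H.Connected) {u v w : W}
    (h : H.dist u w = H.dist u v + H.dist v w) : v ∈ (pth hc u w).support := by
  rw [← pth_append ha hc h, SimpleGraph.Walk.mem_support_append_iff]
  exact Or.inl (pth hc u v).end_mem_support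


lemma step_facts (ha : H.IsAcyclic) (hc : H.Connected) {D : Finset W} {s v : W}
    (hGood : Good hc D s v) (hvs : v ≠ s) :
    H.Adj s ((pth hc s v).getVert 1) ∧ ((pth hc s v).getVert 1) ∈ (pth hc s v).support ∧
      Good hc D ((pth hc s v).getVert 1) v ∧
      s ∉ (pth hc ((pth hc s v).getVert 1) v).support ∧
      H.dist ((pth hc s v).getVert 1) v + 1 = H.dist s v := by
  set p := pth hc s v with hp_def
  have hnil : ¬ p.Nil := by
    rw [SimpleGraph.Walk.not_nil_iff_lt_length, hp_def, pth_length]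
    exact hc.pos_dist_of_ne (Ne.symm hvs)
  have hadj : H.Adj s (p.getVert 1) := SimpleGraph.Walk.adj_snd hnil
  have hcons : SimpleGraph.Walk.cons (p.adj_snd hnil) p.tail = p :=
    SimpleGraph.Walk.cons_tail_eq p hnil
  have hp2 := pth_isPath hc s v
  rw [← hp_def, ← hcons, SimpleGraph.Walk.cons_isPath_iff] at hp2
  obtain ⟨htail, hsns⟩ := hp2
  have hpth_tail : pth hc (p.getVert 1) v = p.tail := (eq_pth ha hc htail).symm
  have hsupp : s :: p.tail.support = p.support := SimpleGraph.Walk.cons_support_tail hnil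
  have hzmem : p.getVert 1 ∈ p.support := by
    rw [← hsupp]
    exact List.mem_cons_of_mem _ p.tail.start_mem_support
  have hlen : H.dist (p.getVert 1) v + 1 = H.dist s v := by
    have h1 : p.tail.length + 1 = p.length := SimpleGraph.Walk.length_tail_add_one hnil
    rw [length_of_isPath ha hc htail] at h1
    rw [h1, hp_def, pth_length]
  refine ⟨hadj, hzmem, ⟨hGood.1, ?_⟩, ?_, hlen⟩
  · intro w hw hwD
    refine hGood.2 w ?_ hwD
    rw [hpth_tail] at hw
    rw [← hsupp]
    exact List.mem_cons_of_mem _ hw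
  · rw [hpth_tail]
    exact hsns

lemma pth_reverse (ha : H.IsAcyclic) (hc : H.Connected) (s u : W) :
    (pth hc s u).reverse = pth hc u s :=
  eq_pth ha hc ((pth_isPath hc s u).reverse)

lemma adj_mem_getVert_one (hc : H.Connected) {s u : W} (hne : s ≠ u) :
    H.Adj s ((pth hc s u).getVert 1) ∧ ((pth hc s u).getVert 1) ∈ (pth hc s u).support := by
  have hnil : ¬ (pth hc s u).Nil := by
    rw [SimpleGraph.Walk.not_nil_iff_lt_length, pth_length]
    exact hc.pos_dist_of_ne hne
  refine ⟨SimpleGraph.Walk.adj_snd hnil, ?_⟩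
  rw [← SimpleGraph.Walk.cons_support_tail hnil]
  exact List.mem_cons_of_mem _ (SimpleGraph.Walk.start_mem_support _)

lemma kraft [Fintype W] [DecidableRel H.Adj] (ha : H.IsAcyclic) (hc : H.Connected)
    (hdeg : ∀ v, H.degree v ≤ 3) (D : Finset W) :
    ∀ n : ℕ, ∀ s t : W, H.Adj s t →
      ∑ v ∈ D.filter (fun v => Good hc D s v ∧ t ∉ (pth hc s v).support ∧ H.dist s v ≤ n),
        (1 / 2 : ℝ) ^ (H.dist s v) ≤ 1 := by
  have hsingle : ∀ (A : Finset W) (s : W), (∀ v ∈ A, v = s) →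
      ∑ v ∈ A, (1 / 2 : ℝ) ^ (H.dist s v) ≤ 1 := by
    intro A s hP
    calc ∑ v ∈ A, (1 / 2 : ℝ) ^ (H.dist s v)
        ≤ ∑ v ∈ {s}, (1 / 2 : ℝ) ^ (H.dist s v) := by
          apply Finset.sum_le_sum_of_subset_of_nonneg
          · intro v hv
            rw [Finset.mem_singleton]
            exact hP v hv
          · intro v _ _
            positivity
      _ = 1 := by rw [Finset.sum_singleton, SimpleGraph.dist_self]; norm_num
  intro n
  induction n with
  | zero =>
    intro s t hst
    apply hsingle
    intro v hv
    rw [Finset.mem_filter] at hv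
    exact ((hc.dist_eq_zero_iff).mp (Nat.le_zero.mp hv.2.2.2)).symm
  | succ n ih =>
    intro s t hst
    by_cases hsD : s ∈ D
    · apply hsingle
      intro v hv
      rw [Finset.mem_filter] at hv
      exact (hv.2.1.2 s (pth hc s v).start_mem_support hsD).symm
    · set A := D.filter
        (fun v => Good hc D s v ∧ t ∉ (pth hc s v).support ∧ H.dist s v ≤ n + 1) with hA
      set E := (H.neighborFinset s).erase t with hE
      have hfacts : ∀ v ∈ A, v ≠ s := by
        rintro v hv rfl
        rw [hA, Finset.mem_filter] at hv
        exact hsD hv.1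
      have hmaps : ∀ v ∈ A, (pth hc s v).getVert 1 ∈ E := by
        intro v hv
        have hv' := hv
        rw [hA, Finset.mem_filter] at hv'
        obtain ⟨hvD, hG, hts, hd⟩ := hv'
        obtain ⟨hadj, hzmem, -, -, -⟩ := step_facts ha hc hG (hfacts v hv)
        rw [hE, Finset.mem_erase, SimpleGraph.mem_neighborFinset _ _ _]
        exact ⟨fun h => hts (h ▸ hzmem), hadj⟩
      rw [← Finset.sum_fiberwise_of_maps_to hmaps (fun v => (1 / 2 : ℝ) ^ (H.dist s v))]
      have hinner : ∀ z ∈ E, ∑ v ∈ A.filter (fun v => (pth hc s v).getVert 1 = z),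
          (1 / 2 : ℝ) ^ (H.dist s v) ≤ 1 / 2 := by
        intro z hz
        rw [hE, Finset.mem_erase, SimpleGraph.mem_neighborFinset _ _ _] at hz
        have hstep : ∀ v ∈ A.filter (fun v => (pth hc s v).getVert 1 = z),
            Good hc D z v ∧ s ∉ (pth hc z v).support ∧ H.dist z v ≤ n ∧
              H.dist s v = H.dist z v + 1 ∧ v ∈ D := by
          intro v hv
          rw [Finset.mem_filter] at hv
          obtain ⟨hvA, hznxt⟩ := hv
          have hv' := hvA
          rw [hA, Finset.mem_filter] at hv'
          obtain ⟨hvD, hG, hts, hd⟩ := hv'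
          obtain ⟨-, -, hGz, hsns, hlen⟩ := step_facts ha hc hG (hfacts v hvA)
          rw [hznxt] at hGz hsns hlen
          exact ⟨hGz, hsns, by omega, by omega, hvD⟩
        calc ∑ v ∈ A.filter (fun v => (pth hc s v).getVert 1 = z),
              (1 / 2 : ℝ) ^ (H.dist s v)
            = ∑ v ∈ A.filter (fun v => (pth hc s v).getVert 1 = z),
              (1 / 2 : ℝ) * (1 / 2 : ℝ) ^ (H.dist z v) := by
              apply Finset.sum_congr rfl
              intro v hv
              rw [(hstep v hv).2.2.2.1, pow_succ]
              ring
          _ = (1 / 2 : ℝ) * ∑ v ∈ A.filter (fun v => (pth hc s v).getVert 1 = z),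
              (1 / 2 : ℝ) ^ (H.dist z v) := by rw [Finset.mul_sum]
          _ ≤ (1 / 2 : ℝ) * ∑ v ∈ D.filter
                (fun v => Good hc D z v ∧ s ∉ (pth hc z v).support ∧ H.dist z v ≤ n),
              (1 / 2 : ℝ) ^ (H.dist z v) := by
              apply mul_le_mul_of_nonneg_left _ (by norm_num)
              apply Finset.sum_le_sum_of_subset_of_nonneg
              · intro v hv
                obtain ⟨hGz, hsns, hdn, -, hvD⟩ := hstep v hv
                rw [Finset.mem_filter]
                exact ⟨hvD, hGz, hsns, hdn⟩
              · intro v _ _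
                positivity
          _ ≤ (1 / 2 : ℝ) * 1 := by
              apply mul_le_mul_of_nonneg_left (ih z s hz.2.symm) (by norm_num)
          _ = 1 / 2 := by norm_num
      calc ∑ z ∈ E, ∑ v ∈ A.filter (fun v => (pth hc s v).getVert 1 = z),
            (1 / 2 : ℝ) ^ (H.dist s v)
          ≤ ∑ z ∈ E, (1 / 2 : ℝ) := Finset.sum_le_sum hinner
        _ = E.card * (1 / 2 : ℝ) := by rw [Finset.sum_const, nsmul_eq_mul]
        _ ≤ 2 * (1 / 2 : ℝ) := by
            apply mul_le_mul_of_nonneg_right _ (by norm_num)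
            have h1 : E.card = H.degree s - 1 := by
              rw [hE, Finset.card_erase_of_mem ((SimpleGraph.mem_neighborFinset _ _ _).mpr hst)]
              rfl
            have h2 := hdeg s
            have h3 : 1 ≤ H.degree s := by
              rw [← SimpleGraph.card_neighborFinset_eq_degree]
              exact Finset.card_pos.mpr ⟨t, (SimpleGraph.mem_neighborFinset _ _ _).mpr hst⟩
            rw [h1]
            have : E.card ≤ 2 := by omega
            exact_mod_cast (by omega : H.degree s - 1 ≤ 2)
        _ = 1 := by norm_num

end ExpAux

namespace ExpAux

attribute [local instance 10] Classical.propDecidable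

variable {V : Type*} [DecidableEq V] {G : SimpleGraph V} {S : Finset V}

/-- The embedding of the induced subgraph. -/
abbrev embS (G : SimpleGraph V) (S : Finset V) : G.induce (S : Set V) ↪g G :=
  SimpleGraph.Embedding.induce (S : Set V)

lemma induce_isAcyclic (ha : G.IsAcyclic) : (G.induce (S : Set V)).IsAcyclic := by
  rw [SimpleGraph.isAcyclic_iff_path_unique]
  intro a b p q
  have h1 := SimpleGraph.Walk.map_isPath_of_injective
    (f := (embS G S).toHom)
    (embS G S).injective p.2
  have h2 := SimpleGraph.Walk.map_isPath_of_injective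
    (f := (embS G S).toHom)
    (embS G S).injective q.2
  have h3 := path_eq_path ha h1 h2
  exact Subtype.ext (SimpleGraph.Walk.map_injective_of_injective
    (embS G S).injective a b h3)

lemma exists_lift : ∀ {u v : V} (p : G.Walk u v) (hu : u ∈ (S : Set V))
    (hv : v ∈ (S : Set V)) (_ : ∀ w ∈ p.support, w ∈ (S : Set V)),
    ∃ q : (G.induce (S : Set V)).Walk ⟨u, hu⟩ ⟨v, hv⟩,
      q.map (embS G S).toHom = p := by
  intro u v p
  induction p with
  | nil =>
    intro hu hv _
    exact ⟨SimpleGraph.Walk.nil, rfl⟩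
  | cons hadj p' ih =>
    intro hu hv hs
    rename_i a b c
    have hb : b ∈ (S : Set V) := hs b (by simp)
    obtain ⟨q', hq'⟩ := ih hb hv (fun w hw => hs w (by simp [hw]))
    refine ⟨SimpleGraph.Walk.cons (show (G.induce (S : Set V)).Adj ⟨a, hu⟩ ⟨b, hb⟩ from hadj) q', ?_⟩
    rw [SimpleGraph.Walk.map_cons, hq']
    rfl


lemma support_pth_subset_S (hT : G.IsTree) (hS : (G.induce (S : Set V)).Connected)
    {u v : V} (hu : u ∈ (S : Set V)) (hv : v ∈ (S : Set V)) :
    ∀ w ∈ (pth hT.isConnected u v).support, w ∈ (S : Set V) := by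
  obtain ⟨q⟩ := hS.preconnected ⟨u, hu⟩ ⟨v, hv⟩
  have hsup : ∀ x ∈ (q.map (embS G S).toHom).support, x ∈ (S : Set V) := by
    intro x hx
    rw [SimpleGraph.Walk.support_map] at hx
    obtain ⟨y, hy, rfl⟩ := List.mem_map.mp hx
    exact y.2
  have heq : (q.map (embS G S).toHom).bypass = pth hT.isConnected u v :=
    eq_pth hT.IsAcyclic hT.isConnected ((q.map (embS G S).toHom).bypass_isPath)
  intro w hw
  rw [← heq] at hw
  exact hsup w ((q.map (embS G S).toHom).support_bypass_subset hw)

lemma dist_induce (hT : G.IsTree) (hS : (G.induce (S : Set V)).Connected)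
    {u v : V} (hu : u ∈ (S : Set V)) (hv : v ∈ (S : Set V)) :
    (G.induce (S : Set V)).dist ⟨u, hu⟩ ⟨v, hv⟩ = G.dist u v := by
  apply le_antisymm
  · obtain ⟨q, hq⟩ := exists_lift (pth hT.isConnected u v) hu hv
      (support_pth_subset_S hT hS hu hv)
    have h1 := SimpleGraph.dist_le q
    have h2 : q.length = G.dist u v := by
      have h3 := congrArg SimpleGraph.Walk.length hq
      rw [SimpleGraph.Walk.length_map] at h3
      rw [← pth_length hT.isConnected u v]
      exact h3
    omega
  · have h1 := SimpleGraph.dist_le ((pth hS ⟨u, hu⟩ ⟨v, hv⟩).map (embS G S).toHom)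
    rwa [SimpleGraph.Walk.length_map, pth_length] at h1

lemma gate (hT : G.IsTree) (hS : (G.induce (S : Set V)).Connected) (v : V) :
    ∃ s0, s0 ∈ (S : Set V) ∧ ∀ s ∈ (S : Set V), G.dist s v = G.dist s s0 + G.dist s0 v := by
  have hc := hT.isConnected
  have ha := hT.IsAcyclic
  have hSne : S.Nonempty := by
    obtain ⟨⟨s0, hs0⟩⟩ := hS.nonempty
    exact ⟨s0, hs0⟩
  obtain ⟨s0, hs0, hmin⟩ := S.exists_min_image (fun s => G.dist s v) hSne
  refine ⟨s0, hs0, fun s hs => ?_⟩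
  have hdisj : ∀ y, y ∈ (pth hc s s0).support → y ∈ (pth hc s0 v).support → y = s0 := by
    intro y h1 h2
    have hyS : y ∈ (S : Set V) := support_pth_subset_S hT hS hs hs0 y h1
    have hadd := dist_add_of_mem_support ha hc h2
    have hle := hmin y hyS
    rw [show G.dist s0 y = G.dist y s0 from SimpleGraph.dist_comm] at hadd
    have h0 : G.dist y s0 = 0 := by omega
    rw [show G.dist y s0 = G.dist s0 y from SimpleGraph.dist_comm] at h0
    exact ((hc.dist_eq_zero_iff).mp h0).symm
  have happ : ((pth hc s s0).append (pth hc s0 v)).IsPath :=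
    isPath_append (pth_isPath hc s s0) (pth_isPath hc s0 v) hdisj
  have hlen := length_of_isPath ha hc happ
  rw [SimpleGraph.Walk.length_append, pth_length, pth_length] at hlen
  omega


end ExpAux

namespace ExpAux

attribute [local instance 10] Classical.propDecidable

variable {V : Type*} [DecidableEq V] {G : SimpleGraph V} {S : Finset V}

lemma main_eds [Fintype V] [DecidableRel G.Adj] (hT : G.IsTree)
    (hdeg : ∀ v, G.degree v ≤ 3) (hS : (G.induce (S : Set V)).Connected)
    (D : Finset V) (hD : IsExpDomSet G D) :
    ∃ D'' : Finset ↥(S : Set V),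
      IsExpDomSet (G.induce (S : Set V)) D'' ∧ D''.card ≤ D.card := by
  have hc := hT.isConnected
  have ha := hT.IsAcyclic
  have hc' : (G.induce (S : Set V)).Connected := hS
  have ha' : (G.induce (S : Set V)).IsAcyclic := induce_isAcyclic ha
  choose π hπS hgate using gate hT hS
  set D' : Finset V := D.image π with hD'def
  have hD'S : ∀ {x : V}, x ∈ D' → x ∈ (S : Set V) := by
    intro x hx
    rw [hD'def, Finset.mem_image] at hx
    obtain ⟨v, -, rfl⟩ := hx
    exact hπS v
  set e : {x // x ∈ D'} ↪ ↥(S : Set V) :=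
    ⟨fun x => ⟨x.1, hD'S x.2⟩, by
      intro a b hab
      have h2 : a.1 = b.1 := congrArg (fun (z : ↥(S : Set V)) => (z : V)) hab
      exact Subtype.ext h2⟩ with he
  set D'' : Finset ↥(S : Set V) := D'.attach.map e with hD''def
  have hmemD'' : ∀ (x : ↥(S : Set V)), x ∈ D'' ↔ (x : V) ∈ D' := by
    intro x
    rw [hD''def, Finset.mem_map]
    constructor
    · rintro ⟨a, -, rfl⟩
      exact a.2
    · intro hx
      exact ⟨⟨x.1, hx⟩, Finset.mem_attach _ _, Subtype.ext rfl⟩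
  have hcard : D''.card ≤ D.card := by
    rw [hD''def, Finset.card_map, Finset.card_attach, hD'def]
    exact Finset.card_image_le
  refine ⟨D'', ?_, hcard⟩
  rintro ⟨u, hu⟩
  by_cases huD' : u ∈ D'
  · exact one_le_wblock_self ha' hc' ((hmemD'' ⟨u, hu⟩).mpr huD')
  have huS : u ∈ (S : Set V) := hu
  -- choose the first D'-vertex on the path from u to π v
  have hσex : ∀ v : V, ∃ x, v ∈ D → ((x ∈ D' ∧ x ∈ (pth hc u (π v)).support) ∧
      ∀ y, y ∈ D' → y ∈ (pth hc u (π v)).support → G.dist u x ≤ G.dist u y) := by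
    intro v
    by_cases hvD : v ∈ D
    · obtain ⟨x, hx, hmin⟩ := ((pth hc u (π v)).support.toFinset.filter
        (· ∈ D')).exists_min_image (fun y => G.dist u y)
        ⟨π v, by
          rw [Finset.mem_filter, List.mem_toFinset]
          refine ⟨(pth hc u (π v)).end_mem_support, ?_⟩
          rw [hD'def]
          exact Finset.mem_image_of_mem π hvD⟩
      rw [Finset.mem_filter, List.mem_toFinset] at hx
      refine ⟨x, fun _ => ⟨⟨hx.2, hx.1⟩, fun y hy1 hy2 => ?_⟩⟩
      exact hmin y (by rw [Finset.mem_filter, List.mem_toFinset]; exact ⟨hy2, hy1⟩)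
    · exact ⟨u, fun h => absurd h hvD⟩
  choose σ hσ using hσex
  set A := D.filter (fun v => Good hc D u v) with hAdef
  have hAfacts : ∀ v ∈ A, Good hc D' u (σ v) ∧
      G.dist u v = G.dist u (σ v) + G.dist (σ v) v ∧ Good hc D (σ v) v := by
    intro v hv
    rw [hAdef, Finset.mem_filter] at hv
    obtain ⟨hvD, hG⟩ := hv
    obtain ⟨⟨hσD', hσmem⟩, hσmin⟩ := hσ v hvD
    have hσS : (σ v) ∈ (S : Set V) := hD'S hσD'
    have hvis : Good hc D' u (σ v) := by
      refine ⟨hσD', fun w hw hwD' => ?_⟩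
      have hw' := hw
      rw [pth_takeUntil ha hc hσmem] at hw'
      have hw2 : w ∈ (pth hc u (π v)).support :=
        (pth hc u (π v)).support_takeUntil_subset hσmem hw'
      have hadd := dist_add_of_mem_support ha hc hw
      have hmin2 := hσmin w hwD' hw2
      have h0 : G.dist w (σ v) = 0 := by omega
      exact (hc.dist_eq_zero_iff).mp h0
    have hg1 := hgate v u huS
    have hg2 := dist_add_of_mem_support ha hc hσmem
    have hg3 := hgate v (σ v) hσS
    have hdist2 : G.dist u v = G.dist u (σ v) + G.dist (σ v) v := by omega
    have hσsup : (σ v) ∈ (pth hc u v).support := mem_support_of_dist_add ha hc hdist2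
    have hGs : Good hc D (σ v) v := by
      refine ⟨hvD, fun w hw hwD => ?_⟩
      refine hG.2 w ?_ hwD
      rw [pth_dropUntil ha hc hσsup] at hw
      exact (pth hc u v).support_dropUntil_subset hσsup hw
    exact ⟨hvis, hdist2, hGs⟩
  have h1 : (1 : ℝ) ≤ ∑ v ∈ A, 2 * (1 / 2 : ℝ) ^ (G.dist u v) := by
    have h0 := hD u
    rw [wblock_eq ha hc] at h0
    rw [hAdef, Finset.sum_filter]
    exact h0
  set B := D'.filter (fun x => Good hc D' u x) with hBdef
  have hmapsAB : ∀ v ∈ A, σ v ∈ B := by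
    intro v hv
    rw [hBdef, Finset.mem_filter]
    exact ⟨(hAfacts v hv).1.1, (hAfacts v hv).1⟩
  have h2 : ∑ v ∈ A, 2 * (1 / 2 : ℝ) ^ (G.dist u v) ≤
      ∑ x ∈ B, 2 * (1 / 2 : ℝ) ^ (G.dist u x) := by
    rw [← Finset.sum_fiberwise_of_maps_to hmapsAB (fun v => 2 * (1 / 2 : ℝ) ^ (G.dist u v))]
    apply Finset.sum_le_sum
    intro s'' hs''B
    rw [hBdef, Finset.mem_filter] at hs''B
    obtain ⟨hs''D', hs''vis⟩ := hs''B
    have hs''S : s'' ∈ (S : Set V) := hD'S hs''D'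
    have hne : s'' ≠ u := fun h => huD' (h ▸ hs''D')
    obtain ⟨hadj, htmem⟩ := adj_mem_getVert_one hc hne
    set t := (pth hc s'' u).getVert 1 with htdef
    have htmem' : t ∈ (pth hc u s'').support := by
      rw [← pth_reverse ha hc s'' u, SimpleGraph.Walk.support_reverse]
      exact List.mem_reverse.mpr htmem
    have hsubset : A.filter (fun v => σ v = s'') ⊆ D.filter (fun v => Good hc D s'' v ∧
        t ∉ (pth hc s'' v).support ∧ G.dist s'' v ≤ Fintype.card V) := by
      intro v hv
      rw [Finset.mem_filter] at hv
      obtain ⟨hvA, hσv⟩ := hv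
      obtain ⟨hvis, hdist2, hGs⟩ := hAfacts v hvA
      rw [hσv] at hdist2 hGs
      have hvD : v ∈ D := by
        rw [hAdef, Finset.mem_filter] at hvA
        exact hvA.1
      refine Finset.mem_filter.mpr ⟨hvD, hGs, ?_, ?_⟩
      · intro ht2
        have happ := pth_append ha hc hdist2
        have hnodup := (pth_isPath hc u v).support_nodup
        rw [← happ, SimpleGraph.Walk.support_append] at hnodup
        have hdisj := List.disjoint_of_nodup_append hnodup
        have htne : t ≠ s'' := fun h => (hadj.ne) h.symm
        have ht3 : t ∈ (pth hc s'' v).support.tail := by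
          rcases (SimpleGraph.Walk.mem_support_iff _).mp ht2 with h | h
          · exact absurd h htne
          · exact h
        exact hdisj htmem' ht3
      · have hlt := (pth_isPath hc s'' v).length_lt
        rw [pth_length] at hlt
        omega
    calc ∑ v ∈ A.filter (fun v => σ v = s''), 2 * (1 / 2 : ℝ) ^ (G.dist u v)
        = ∑ v ∈ A.filter (fun v => σ v = s''),
            2 * (1 / 2 : ℝ) ^ (G.dist u s'') * (1 / 2 : ℝ) ^ (G.dist s'' v) := by
          apply Finset.sum_congr rfl
          intro v hv
          rw [Finset.mem_filter] at hv
          have hdist2 := (hAfacts v hv.1).2.1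
          rw [hv.2] at hdist2
          rw [hdist2, pow_add]
          ring
      _ = 2 * (1 / 2 : ℝ) ^ (G.dist u s'') * ∑ v ∈ A.filter (fun v => σ v = s''),
            (1 / 2 : ℝ) ^ (G.dist s'' v) := by rw [← Finset.mul_sum]
      _ ≤ 2 * (1 / 2 : ℝ) ^ (G.dist u s'') * 1 := by
          refine mul_le_mul_of_nonneg_left ?_ (by positivity)
          refine le_trans (Finset.sum_le_sum_of_subset_of_nonneg hsubset ?_) ?_
          · intro v _ _
            positivity
          · exact kraft ha hc hdeg D (Fintype.card V) s'' t hadj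
      _ = 2 * (1 / 2 : ℝ) ^ (G.dist u s'') := by ring
  have hgood' : ∀ s'' (hs''D' : s'' ∈ D'), Good hc D' u s'' →
      Good hc' D'' ⟨u, hu⟩ ⟨s'', hD'S hs''D'⟩ := by
    intro s'' hs''D' hvis
    have hs''S := hD'S hs''D'
    obtain ⟨q, hq⟩ := exists_lift (pth hc u s'') hu hs''S
      (support_pth_subset_S hT hS hu hs''S)
    have hqpath : q.IsPath := by
      have hmapped : (q.map (embS G S).toHom).IsPath := by
        rw [hq]
        exact pth_isPath hc u s''
      exact SimpleGraph.Walk.IsPath.of_map hmapped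
    have hqeq : pth hc' ⟨u, hu⟩ (⟨s'', hs''S⟩ : ↥(S : Set V)) = q := (eq_pth ha' hc' hqpath).symm
    refine ⟨(hmemD'' _).mpr hs''D', ?_⟩
    intro w hw hwD''
    rw [hqeq] at hw
    have hw2 : (w : V) ∈ (pth hc u s'').support := by
      have h2 : (embS G S).toHom w ∈ (q.map (embS G S).toHom).support := by
        rw [SimpleGraph.Walk.support_map]
        exact List.mem_map_of_mem hw
      rw [← hq]
      exact h2
    exact Subtype.ext (hvis.2 (w : V) hw2 ((hmemD'' w).mp hwD''))
  have h3 : ∑ x ∈ B, 2 * (1 / 2 : ℝ) ^ (G.dist u x) ≤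
      wblock (G.induce (S : Set V)) D'' ⟨u, hu⟩ := by
    rw [wblock_eq ha' hc']
    set F : V → ℝ := fun a => if h : a ∈ (S : Set V) then
      (if Good hc' D'' ⟨u, hu⟩ ⟨a, h⟩ then
        2 * (1 / 2 : ℝ) ^ ((G.induce (S : Set V)).dist ⟨u, hu⟩ ⟨a, h⟩) else 0) else 0 with hF
    have hFnn : ∀ a, 0 ≤ F a := by
      intro a
      simp only [hF]
      by_cases h1 : a ∈ (S : Set V)
      · rw [dif_pos h1]
        by_cases h2 : Good hc' D'' ⟨u, hu⟩ ⟨a, h1⟩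
        · rw [if_pos h2]
          positivity
        · rw [if_neg h2]
      · rw [dif_neg h1]
    have hsum : (∑ x ∈ D'', if Good hc' D'' ⟨u, hu⟩ x then
        2 * (1 / 2 : ℝ) ^ ((G.induce (S : Set V)).dist ⟨u, hu⟩ x) else 0) = ∑ a ∈ D', F a := by
      rw [hD''def, Finset.sum_map, ← Finset.sum_attach D' F]
      apply Finset.sum_congr rfl
      intro x _
      simp only [he, Function.Embedding.coeFn_mk, hF]
      rw [dif_pos (hD'S x.2)]
      rfl
    rw [hsum]
    calc ∑ x ∈ B, 2 * (1 / 2 : ℝ) ^ (G.dist u x) = ∑ x ∈ B, F x := by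
          apply Finset.sum_congr rfl
          intro s'' hs''
          rw [hBdef, Finset.mem_filter] at hs''
          obtain ⟨hs''D', hvis⟩ := hs''
          have hs''S : s'' ∈ (S : Set V) := hD'S hs''D'
          simp only [hF]
          rw [dif_pos hs''S, if_pos (hgood' s'' hs''D' hvis), dist_induce hT hS hu hs''S]
      _ ≤ ∑ x ∈ D', F x :=
          Finset.sum_le_sum_of_subset_of_nonneg (Finset.filter_subset _ _)
            (fun x _ _ => hFnn x)
  linarith

end ExpAux

/-- If `T'` is a subtree of a subcubic tree `T`, then `γ_e(T') ≤ γ_e(T)`. -/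
theorem stmt_16 {V : Type*} [Fintype V] (G : SimpleGraph V) [DecidableRel G.Adj]
    (hT : G.IsTree) (hsub : Subcubic G) (S : Finset V)
    (hS : (G.induce (S : Set V)).Connected) :
    gammaE (G.induce (S : Set V)) ≤ gammaE G := by
  classical
  have hc := hT.isConnected
  have ha := hT.IsAcyclic
  have hne : {k | ∃ D : Finset V, IsExpDomSet G D ∧ D.card = k}.Nonempty :=
    ⟨(Finset.univ : Finset V).card, Finset.univ,
      fun u => ExpAux.one_le_wblock_self ha hc (Finset.mem_univ u), rfl⟩
  obtain ⟨D, hD, hDcard⟩ := Nat.sInf_mem hne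
  obtain ⟨D'', hD'', hle⟩ := ExpAux.main_eds hT hsub hS D hD
  calc gammaE (G.induce (S : Set V)) ≤ D''.card := Nat.sInf_le ⟨D'', hD'', rfl⟩
    _ ≤ D.card := hle
    _ = gammaE G := hDcard
end

section
/- For the path P_n, the fractional porous exponential domination number satisfies γ*_{e,f}(P_n) = (n+2)/6. -/
open SimpleGraph Finset

variable {V : Type*}

lemma pg_conn {n : ℕ} (hn : 1 ≤ n) : (pathGraph n).Connected := by
  obtain ⟨m, rfl⟩ : ∃ m, n = m + 1 := ⟨n - 1, by omega⟩
  exact pathGraph_connected m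

lemma walk_len_lb {n : ℕ} : ∀ {i j : Fin n} (p : (pathGraph n).Walk i j),
    Nat.dist i.val j.val ≤ p.length := by
  intro i j p
  induction p with
  | nil => simp [Nat.dist_self]
  | @cons a b c h p ih =>
    rw [pathGraph_adj] at h
    have h1 : Nat.dist a.val b.val = 1 := by
      rcases h with h | h <;> simp [Nat.dist] <;> omega
    calc Nat.dist a.val c.val ≤ Nat.dist a.val b.val + Nat.dist b.val c.val :=
          Nat.dist.triangle_inequality _ _ _
      _ ≤ 1 + p.length := by rw [h1]; exact Nat.add_le_add_left ih _
      _ = (Walk.length (Walk.cons (by rw [pathGraph_adj]; exact h) p)) := by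
            simp [Walk.length_cons]; omega

lemma pg_dist_le {n : ℕ} : ∀ (k : ℕ) (i j : Fin n), i.val + k = j.val →
    (pathGraph n).dist i j ≤ k := by
  intro k
  induction k with
  | zero => intro i j h; have : i = j := Fin.ext (by omega); simp [this]
  | succ k ih =>
    intro i j h
    have hn : 1 ≤ n := by omega
    have hi' : i.val + 1 < n := by have := j.isLt; omega
    set i' : Fin n := ⟨i.val + 1, by omega⟩ with hi's
    have hadj : (pathGraph n).Adj i i' := by rw [pathGraph_adj]; left; rfl
    have h1 : (pathGraph n).dist i i' = 1 := (dist_eq_one_iff_adj).2 hadj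
    calc (pathGraph n).dist i j ≤ (pathGraph n).dist i i' + (pathGraph n).dist i' j :=
          (pg_conn hn).dist_triangle
      _ ≤ 1 + k := by rw [h1]; exact Nat.add_le_add_left (ih i' j (by simp [hi's]; omega)) _
      _ = k + 1 := by omega

lemma pg_dist {n : ℕ} (hn : 1 ≤ n) (i j : Fin n) :
    (pathGraph n).dist i j = Nat.dist i.val j.val := by
  apply le_antisymm
  · rcases le_or_gt i.val j.val with h | h
    · exact pg_dist_le _ i j (by simp [Nat.dist]; omega)
    · rw [dist_comm]
      calc (pathGraph n).dist j i ≤ Nat.dist j.val i.val :=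
            pg_dist_le _ j i (by simp [Nat.dist]; omega)
        _ = Nat.dist i.val j.val := Nat.dist_comm _ _
  · obtain ⟨p, hp⟩ := ((pg_conn hn).preconnected i j).exists_walk_length_eq_dist
    rw [← hp]; exact walk_len_lb p


lemma geom_aux (m : ℕ) : ∑ i ∈ range m, ((1/2:ℝ))^i = 2 - 2*(1/2)^m := by
  induction m with
  | zero => simp
  | succ m ih => rw [Finset.sum_range_succ, ih, pow_succ]; ring

lemma hG {n u : ℕ} (h : u < n) :
    ∑ i ∈ range n, ((1/2:ℝ))^(Nat.dist u i) = 3 - (1/2)^u - (1/2)^(n-1-u) := by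
  rw [← Finset.sum_range_add_sum_Ico _ (by omega : u+1 ≤ n)]
  have hA : ∑ i ∈ range (u+1), ((1/2:ℝ))^(Nat.dist u i) = 2 - (1/2)^u := by
    have h1 : ∀ i ∈ range (u+1), ((1/2:ℝ))^(Nat.dist u i) = (1/2:ℝ)^(u-i) := by
      intro i hi; simp only [mem_range] at hi; congr 1; simp [Nat.dist]; omega
    rw [Finset.sum_congr rfl h1]
    have h2 := Finset.sum_range_reflect (fun i => ((1/2:ℝ))^i) (u+1)
    have h3 : ∑ i ∈ range (u+1), ((1/2:ℝ))^(u-i)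
        = ∑ j ∈ range (u+1), (fun i => ((1/2:ℝ))^i) (u + 1 - 1 - j) := by
      apply Finset.sum_congr rfl; intro i hi; congr 1
    rw [h3, h2, geom_aux, pow_succ]; ring
  have hB : ∑ i ∈ Ico (u+1) n, ((1/2:ℝ))^(Nat.dist u i) = 1 - (1/2)^(n-1-u) := by
    rw [Finset.sum_Ico_eq_sum_range]
    have h1 : ∀ i ∈ range (n-(u+1)), ((1/2:ℝ))^(Nat.dist u (u+1+i)) = (1/2:ℝ)^(i+1) := by
      intro i hi; congr 1; simp [Nat.dist]; omega
    rw [Finset.sum_congr rfl h1]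
    have h2 := Finset.sum_range_succ' (fun i => ((1/2:ℝ))^i) (n-(u+1))
    rw [geom_aux] at h2
    have h3 : ∑ i ∈ range (n-(u+1)), ((1/2:ℝ))^(i+1)
        = 2 - 2*(1/2)^(n-(u+1)+1) - 1 := by
      have := h2; push_cast at this ⊢; linarith [this]
    rw [h3, pow_succ]
    have h4 : ((1/2:ℝ))^(n-(u+1)) = (1/2:ℝ)^(n-1-u) := by congr 1; omega
    rw [h4]; ring
  rw [hA, hB]; ring

noncomputable def yfun (n : ℕ) : Fin n → ℝ := fun v =>
  1/6 + (if v.val = 0 then 1/6 else 0) + (if v.val = n-1 then 1/6 else 0)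

lemma yfun_nonneg (n : ℕ) (v : Fin n) : 0 ≤ yfun n v := by
  unfold yfun; split_ifs <;> norm_num

lemma key_id {n : ℕ} (hn : 1 ≤ n) (u : Fin n) :
    ∑ v : Fin n, expw (SimpleGraph.pathGraph n) u v * yfun n v = 1 := by
  have hF : ∑ v : Fin n, expw (SimpleGraph.pathGraph n) u v * yfun n v
      = ∑ i ∈ range n, (2 * (1/2:ℝ)^(Nat.dist u.val i) *
          (1/6 + (if i = 0 then 1/6 else 0) + (if i = n-1 then 1/6 else 0))) := by
    rw [← Fin.sum_univ_eq_sum_range]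
    apply Finset.sum_congr rfl
    intro v _
    rw [expw, pg_dist hn]
    rfl
  rw [hF]
  have hsplit : ∀ i ∈ range n,
      2 * (1/2:ℝ)^(Nat.dist u.val i) *
          (1/6 + (if i = 0 then 1/6 else 0) + (if i = n-1 then 1/6 else 0))
      = (1/3) * (1/2:ℝ)^(Nat.dist u.val i)
        + (if i = 0 then 2 * (1/2:ℝ)^(Nat.dist u.val i) * (1/6) else 0)
        + (if i = n-1 then 2 * (1/2:ℝ)^(Nat.dist u.val i) * (1/6) else 0) := by
    intro i _; split_ifs <;> ring
  rw [Finset.sum_congr rfl hsplit]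
  rw [Finset.sum_add_distrib, Finset.sum_add_distrib, ← Finset.mul_sum,
    Finset.sum_ite_eq' (range n) 0, Finset.sum_ite_eq' (range n) (n-1)]
  have h0 : (0 : ℕ) ∈ range n := by simp; omega
  have h1 : n - 1 ∈ range n := by simp; omega
  rw [if_pos h0, if_pos h1, hG u.isLt]
  have hd0 : Nat.dist u.val 0 = u.val := by simp [Nat.dist]
  have hd1 : Nat.dist u.val (n-1) = n - 1 - u.val := by
    have := u.isLt; simp [Nat.dist]; omega
  rw [hd0, hd1]; ring

lemma yfun_sum {n : ℕ} (hn : 1 ≤ n) : ∑ v : Fin n, yfun n v = ((n:ℝ) + 2) / 6 := by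
  have hF : ∑ v : Fin n, yfun n v
      = ∑ i ∈ range n, ((1/6:ℝ) + (if i = 0 then 1/6 else 0)
          + (if i = n-1 then 1/6 else 0)) := by
    rw [← Fin.sum_univ_eq_sum_range]; rfl
  rw [hF, Finset.sum_add_distrib, Finset.sum_add_distrib,
    Finset.sum_ite_eq' (range n) 0, Finset.sum_ite_eq' (range n) (n-1),
    if_pos (by simp; omega : (0:ℕ) ∈ range n),
    if_pos (by simp; omega : n - 1 ∈ range n), Finset.sum_const, card_range]
  ring

/-- For the path `P_n` (`n ≥ 1`), `γ*_{e,f}(P_n) = (n+2)/6`. -/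
theorem stmt_18 (n : ℕ) (hn : 1 ≤ n) :
    gammaEF (SimpleGraph.pathGraph n) = ((n : ℝ) + 2) / 6 := by
  have hyfeas : FracFeasible (SimpleGraph.pathGraph n) (yfun n) := by
    constructor
    · exact yfun_nonneg n
    · intro v
      have hsymm : ∀ u : Fin n,
          expw (SimpleGraph.pathGraph n) u v = expw (SimpleGraph.pathGraph n) v u := by
        intro u; unfold expw; rw [SimpleGraph.dist_comm]
      have heq : ∑ u : Fin n, expw (SimpleGraph.pathGraph n) u v * yfun n u = 1 := by
        calc ∑ u : Fin n, expw (SimpleGraph.pathGraph n) u v * yfun n u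
            = ∑ u : Fin n, expw (SimpleGraph.pathGraph n) v u * yfun n u := by
              apply Finset.sum_congr rfl; intro u _; rw [hsymm u]
          _ = 1 := key_id hn v
      rw [heq]
  have hmem : ((n:ℝ) + 2) / 6 ∈
      {s | ∃ x : Fin n → ℝ, FracFeasible (SimpleGraph.pathGraph n) x ∧ s = ∑ u : Fin n, x u} :=
    ⟨yfun n, hyfeas, (yfun_sum hn).symm⟩
  have hlb : ∀ s ∈ {s | ∃ x : Fin n → ℝ,
      FracFeasible (SimpleGraph.pathGraph n) x ∧ s = ∑ u : Fin n, x u},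
      ((n:ℝ) + 2) / 6 ≤ s := by
    rintro s ⟨x, ⟨hx0, hxc⟩, rfl⟩
    have hkey : ∑ u : Fin n, x u
        = ∑ v : Fin n, yfun n v * ∑ u : Fin n, expw (SimpleGraph.pathGraph n) u v * x u := by
      calc ∑ u : Fin n, x u
          = ∑ u : Fin n, x u * ∑ v : Fin n, expw (SimpleGraph.pathGraph n) u v * yfun n v := by
            apply Finset.sum_congr rfl; intro u _; rw [key_id hn u, mul_one]
        _ = ∑ u : Fin n, ∑ v : Fin n, x u * (expw (SimpleGraph.pathGraph n) u v * yfun n v) := by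
            apply Finset.sum_congr rfl; intro u _; rw [Finset.mul_sum]
        _ = ∑ v : Fin n, ∑ u : Fin n, x u * (expw (SimpleGraph.pathGraph n) u v * yfun n v) :=
            Finset.sum_comm
        _ = ∑ v : Fin n, yfun n v * ∑ u : Fin n, expw (SimpleGraph.pathGraph n) u v * x u := by
            apply Finset.sum_congr rfl; intro v _
            rw [Finset.mul_sum]; apply Finset.sum_congr rfl; intro u _; ring
    rw [hkey, ← yfun_sum hn]
    apply Finset.sum_le_sum
    intro v _
    have := hxc v
    nlinarith [yfun_nonneg n v]
  unfold gammaEF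
  exact le_antisymm (csInf_le ⟨_, hlb⟩ hmem) (le_csInf ⟨_, hmem⟩ hlb)
end
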